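/- arXiv:1202.2587 — 4 statements merged into one kernel-verified Lean document; each statement's English description precedes it below -/
import Mathlib

section
/- Let Q be a finite n×n matrix with nonnegative entries which is symmetrizable (π(z)Q(z,z') = π(z')Q(z',z) for a positive weight π) and substochastic, such that every row sum of Q^n is strictly less than 1. Then the operator norm of Q on ℓ²(π) is strictly less than 1. -/
open scoped BigOperators

/-- The norm on `ℓ²(V, π)` for a finite set `V` with positive weights `π`. -/
noncomputable def piNorm {V : Type*} [Fintype V] (π : V → ℝ) (f : V → ℝ) : ℝ :=
  Real.sqrt (∑ z, π z * f z ^ 2)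

section Aux

variable {V : Type*} [Fintype V] [DecidableEq V]

private lemma S_nonneg (π : V → ℝ) (hπ : ∀ z, 0 < π z) (f : V → ℝ) :
    0 ≤ ∑ z, π z * f z ^ 2 :=
  Finset.sum_nonneg fun z _ => mul_nonneg (hπ z).le (sq_nonneg _)

/-- Weighted Cauchy–Schwarz. -/
private lemma wcs (π : V → ℝ) (hπ : ∀ z, 0 < π z) (f g : V → ℝ) :
    (∑ z, π z * (f z * g z)) ^ 2 ≤ (∑ z, π z * f z ^ 2) * (∑ z, π z * g z ^ 2) := by
  calc (∑ z, π z * (f z * g z)) ^ 2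
      = (∑ z, (Real.sqrt (π z) * f z) * (Real.sqrt (π z) * g z)) ^ 2 := by
        congr 1; refine Finset.sum_congr rfl fun z _ => ?_
        rw [mul_mul_mul_comm, Real.mul_self_sqrt (hπ z).le]
    _ ≤ (∑ z, (Real.sqrt (π z) * f z) ^ 2) * (∑ z, (Real.sqrt (π z) * g z) ^ 2) :=
        Finset.sum_mul_sq_le_sq_mul_sq _ _ _
    _ = _ := by
        have e : ∀ h : V → ℝ, ∑ z, (Real.sqrt (π z) * h z) ^ 2 = ∑ z, π z * h z ^ 2 := by
          intro h
          refine Finset.sum_congr rfl fun z _ => ?_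
          rw [mul_pow, Real.sq_sqrt (hπ z).le]
        rw [e f, e g]

/-- Entrywise nonnegativity of powers. -/
private lemma pow_entry_nonneg (Q : Matrix V V ℝ) (hQ : ∀ z z', 0 ≤ Q z z') :
    ∀ m z z', 0 ≤ (Q ^ m) z z' := by
  intro m
  induction m with
  | zero =>
    intro z z'
    rcases eq_or_ne z z' with rfl | h
    · simp [Matrix.one_apply]
    · simp [Matrix.one_apply, h]
  | succ m ih =>
    intro z z'
    rw [pow_succ, Matrix.mul_apply]
    exact Finset.sum_nonneg fun y _ => mul_nonneg (ih z y) (hQ y z')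

/-- Symmetrizability of powers. -/
private lemma pow_sym (Q : Matrix V V ℝ) (π : V → ℝ)
    (hsym : ∀ z z', π z * Q z z' = π z' * Q z' z) :
    ∀ m z z', π z * (Q ^ m) z z' = π z' * (Q ^ m) z' z := by
  intro m
  induction m with
  | zero =>
    intro z z'
    rcases eq_or_ne z z' with rfl | h
    · rfl
    · simp [Matrix.one_apply, h, h.symm]
  | succ m ih =>
    intro z z'
    have h1 : (Q ^ (m + 1)) z z' = ∑ y, Q z y * (Q ^ m) y z' := by
      rw [pow_succ']; exact Matrix.mul_apply
    have h2 : (Q ^ (m + 1)) z' z = ∑ y, (Q ^ m) z' y * Q y z := by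
      rw [pow_succ]; exact Matrix.mul_apply
    rw [h1, h2, Finset.mul_sum, Finset.mul_sum]
    refine Finset.sum_congr rfl fun y _ => ?_
    calc π z * (Q z y * (Q ^ m) y z')
        = (π z * Q z y) * (Q ^ m) y z' := by ring
      _ = (π y * Q y z) * (Q ^ m) y z' := by rw [hsym]
      _ = Q y z * (π y * (Q ^ m) y z') := by ring
      _ = Q y z * (π z' * (Q ^ m) z' y) := by rw [ih]
      _ = π z' * ((Q ^ m) z' y * Q y z) := by ring

/-- Self-adjointness of a symmetrizable matrix on `ℓ²(π)`. -/
private lemma selfadj (M : Matrix V V ℝ) (π : V → ℝ)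
    (hMsym : ∀ z z', π z * M z z' = π z' * M z' z) (f g : V → ℝ) :
    ∑ z, π z * (M.mulVec f z * g z) = ∑ z, π z * (f z * M.mulVec g z) := by
  simp only [Matrix.mulVec, dotProduct]
  calc ∑ z, π z * ((∑ y, M z y * f y) * g z)
      = ∑ z, ∑ y, (π z * M z y) * (f y * g z) := by
        refine Finset.sum_congr rfl fun z _ => ?_
        rw [Finset.sum_mul, Finset.mul_sum]
        exact Finset.sum_congr rfl fun y _ => by ring
    _ = ∑ y, ∑ z, (π z * M z y) * (f y * g z) := Finset.sum_comm
    _ = ∑ y, ∑ z, (π y * M y z) * (f y * g z) := by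
        exact Finset.sum_congr rfl fun y _ => Finset.sum_congr rfl fun z _ => by rw [hMsym]
    _ = ∑ y, π y * (f y * ∑ z, M y z * g z) := by
        refine Finset.sum_congr rfl fun y _ => ?_
        rw [Finset.mul_sum, Finset.mul_sum]
        exact Finset.sum_congr rfl fun z _ => by ring

/-- Schur test: symmetrizable nonnegative matrix with row sums `≤ r` has norm `≤ r`. -/
private lemma schur (M : Matrix V V ℝ) (π : V → ℝ) (hπ : ∀ z, 0 < π z)
    (hM : ∀ z z', 0 ≤ M z z')
    (hMsym : ∀ z z', π z * M z z' = π z' * M z' z) (r : ℝ) (hr : 0 ≤ r)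
    (hrow : ∀ z, ∑ z', M z z' ≤ r) (f : V → ℝ) :
    ∑ z, π z * (M.mulVec f z) ^ 2 ≤ r ^ 2 * ∑ z, π z * f z ^ 2 := by
  have key : ∀ z, (M.mulVec f z) ^ 2 ≤ r * ∑ z', M z z' * f z' ^ 2 := by
    intro z
    have hcs : (∑ z', M z z' * f z') ^ 2 ≤ (∑ z', M z z') * ∑ z', M z z' * f z' ^ 2 := by
      have h := Finset.sum_mul_sq_le_sq_mul_sq Finset.univ
        (fun z' => Real.sqrt (M z z')) (fun z' => Real.sqrt (M z z') * f z')
      have e1 : ∀ z', Real.sqrt (M z z') * (Real.sqrt (M z z') * f z') = M z z' * f z' := by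
        intro z'; rw [← mul_assoc, Real.mul_self_sqrt (hM z z')]
      have e2 : ∀ z', Real.sqrt (M z z') ^ 2 = M z z' := fun z' => Real.sq_sqrt (hM z z')
      have e3 : ∀ z', (Real.sqrt (M z z') * f z') ^ 2 = M z z' * f z' ^ 2 := by
        intro z'; rw [mul_pow, e2]
      simpa only [e1, e2, e3] using h
    have hM2 : 0 ≤ ∑ z', M z z' * f z' ^ 2 :=
      Finset.sum_nonneg fun z' _ => mul_nonneg (hM z z') (sq_nonneg _)
    calc (M.mulVec f z) ^ 2 = (∑ z', M z z' * f z') ^ 2 := rfl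
      _ ≤ (∑ z', M z z') * ∑ z', M z z' * f z' ^ 2 := hcs
      _ ≤ r * ∑ z', M z z' * f z' ^ 2 := mul_le_mul_of_nonneg_right (hrow z) hM2
  calc ∑ z, π z * (M.mulVec f z) ^ 2
      ≤ ∑ z, π z * (r * ∑ z', M z z' * f z' ^ 2) := by
        exact Finset.sum_le_sum fun z _ => mul_le_mul_of_nonneg_left (key z) (hπ z).le
    _ = r * ∑ z', (∑ z, π z * M z z') * f z' ^ 2 := by
        simp only [Finset.mul_sum, Finset.sum_mul]
        rw [Finset.sum_comm]
        exact Finset.sum_congr rfl fun a _ => Finset.sum_congr rfl fun b _ => by ring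
    _ = r * ∑ z', π z' * (∑ z, M z' z) * f z' ^ 2 := by
        congr 1
        refine Finset.sum_congr rfl fun z' _ => ?_
        have hsum : ∑ z, π z * M z z' = π z' * ∑ z, M z' z := by
          rw [Finset.mul_sum]
          exact Finset.sum_congr rfl fun z _ => hMsym z z'
        rw [hsum]
    _ ≤ r * ∑ z', π z' * r * f z' ^ 2 := by
        refine mul_le_mul_of_nonneg_left (Finset.sum_le_sum fun z' _ => ?_) hr
        refine mul_le_mul_of_nonneg_right ?_ (sq_nonneg _)
        exact mul_le_mul_of_nonneg_left (hrow z') (hπ z').le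
    _ = r ^ 2 * ∑ z, π z * f z ^ 2 := by
        simp only [Finset.mul_sum]
        exact Finset.sum_congr rfl fun z _ => by ring

end Aux

/-- A symmetrizable substochastic `n × n` matrix all of whose `n`-th power row sums are
strictly less than `1` has operator norm on `ℓ²(π)` strictly less than `1`. -/
theorem opNorm_lt_one_of_rowsums_lt_one {V : Type*} [Fintype V] [DecidableEq V]
    (Q : Matrix V V ℝ) (π : V → ℝ)
    (hπpos : ∀ z, 0 < π z)
    (hQnonneg : ∀ z z', 0 ≤ Q z z')
    (hsym : ∀ z z', π z * Q z z' = π z' * Q z' z)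
    (hsub : ∀ z, ∑ z', Q z z' ≤ 1)
    (hrow : ∀ z, ∑ z', (Q ^ Fintype.card V) z z' < 1) :
    ∃ c : ℝ, c < 1 ∧ ∀ f : V → ℝ, piNorm π (Q.mulVec f) ≤ c * piNorm π f := by
  cases isEmpty_or_nonempty V with
  | inl hV =>
    refine ⟨1/2, by norm_num, fun f => ?_⟩
    simp [piNorm, Finset.univ_eq_empty]
  | inr hV =>
    set N := Fintype.card V with hN
    -- the maximal row sum of Q^N
    set r : ℝ := Finset.univ.sup' Finset.univ_nonempty (fun z => ∑ z', (Q ^ N) z z') with hrdef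
    have hr1 : r < 1 := (Finset.sup'_lt_iff _).mpr fun z _ => hrow z
    have hrowler : ∀ z, ∑ z', (Q ^ N) z z' ≤ r := by
      intro z
      rw [hrdef]
      exact Finset.le_sup' (fun z => ∑ z', (Q ^ N) z z') (Finset.mem_univ z)
    set r' : ℝ := max r (1/2) with hr'def
    have hr'0 : (0:ℝ) < r' := lt_of_lt_of_le (by norm_num) (le_max_right _ _)
    have hr'1 : r' < 1 := max_lt hr1 (by norm_num)
    have hrowler' : ∀ z, ∑ z', (Q ^ N) z z' ≤ r' :=
      fun z => (hrowler z).trans (le_max_left _ _)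
    -- choose m = 2^N ≥ N
    set m : ℕ := 2 ^ N with hmdef
    have hNm : N ≤ m := (Nat.lt_two_pow_self (n := N)).le
    have hm0 : m ≠ 0 := by positivity
    -- norms
    set S : (V → ℝ) → ℝ := fun g => ∑ z, π z * g z ^ 2 with hSdef
    have hS0 : ∀ g, 0 ≤ S g := fun g => S_nonneg π hπpos g
    -- contraction: applying any power of Q does not increase S
    have hcontr : ∀ (j : ℕ) (g : V → ℝ), S ((Q ^ j).mulVec g) ≤ S g := by
      intro j
      induction j with
      | zero => intro g; simp [hSdef, Matrix.one_mulVec]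
      | succ j ih =>
        intro g
        have he : (Q ^ (j + 1)).mulVec g = (Q ^ j).mulVec (Q.mulVec g) := by
          rw [Matrix.mulVec_mulVec, ← pow_succ]
        rw [he]
        refine (ih (Q.mulVec g)).trans ?_
        have := schur Q π hπpos hQnonneg hsym 1 zero_le_one hsub g
        simpa using this
    -- key log-convexity: S(Q^j f)^2 ≤ S(Q^(2j) f) * S f
    have hkey : ∀ (j : ℕ) (f : V → ℝ),
        S ((Q ^ j).mulVec f) ^ 2 ≤ S ((Q ^ (2 * j)).mulVec f) * S f := by
      intro j f
      have hsa := selfadj (Q ^ j) π (pow_sym Q π hsym j) f ((Q ^ j).mulVec f)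
      have he1 : S ((Q ^ j).mulVec f) = ∑ z, π z * (f z * (Q ^ (2 * j)).mulVec f z) := by
        have : ∀ z, π z * ((Q ^ j).mulVec f z) ^ 2
            = π z * ((Q ^ j).mulVec f z * (Q ^ j).mulVec f z) := by
          intro z; ring
        rw [hSdef]
        simp only
        rw [Finset.sum_congr rfl (fun z _ => this z), hsa]
        refine Finset.sum_congr rfl fun z _ => ?_
        rw [Matrix.mulVec_mulVec, ← pow_add, two_mul]
      rw [he1]
      have := wcs π hπpos f ((Q ^ (2 * j)).mulVec f)
      calc (∑ z, π z * (f z * (Q ^ (2 * j)).mulVec f z)) ^ 2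
          ≤ S f * S ((Q ^ (2 * j)).mulVec f) := this
        _ = S ((Q ^ (2 * j)).mulVec f) * S f := mul_comm _ _
    -- doubling induction
    have hdbl : ∀ (k : ℕ) (f : V → ℝ),
        S (Q.mulVec f) ^ (2 ^ k) ≤ S ((Q ^ (2 ^ k)).mulVec f) * S f ^ (2 ^ k - 1) := by
      intro k f
      induction k with
      | zero => simpa using le_of_eq (by rw [pow_one]; ring)
      | succ k ih =>
        have hp1 : (1:ℕ) ≤ 2 ^ k := Nat.one_le_two_pow
        have hexp : 2 ^ (k + 1) = 2 ^ k * 2 := by rw [pow_succ]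
        calc S (Q.mulVec f) ^ 2 ^ (k + 1)
            = (S (Q.mulVec f) ^ 2 ^ k) ^ 2 := by rw [hexp, pow_mul]
          _ ≤ (S ((Q ^ (2 ^ k)).mulVec f) * S f ^ (2 ^ k - 1)) ^ 2 :=
              pow_le_pow_left₀ (pow_nonneg (hS0 _) _) ih 2
          _ = S ((Q ^ (2 ^ k)).mulVec f) ^ 2 * (S f ^ (2 ^ k - 1)) ^ 2 := mul_pow _ _ _
          _ ≤ (S ((Q ^ (2 * 2 ^ k)).mulVec f) * S f) * (S f ^ (2 ^ k - 1)) ^ 2 := by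
              refine mul_le_mul_of_nonneg_right (hkey (2 ^ k) f)
                (pow_nonneg (pow_nonneg (hS0 f) _) 2)
          _ = S ((Q ^ (2 ^ (k + 1))).mulVec f) * S f ^ (2 ^ (k + 1) - 1) := by
              have h2 : 2 * 2 ^ k = 2 ^ (k + 1) := by rw [pow_succ]; ring
              rw [h2, ← pow_mul, mul_assoc, ← pow_succ']
              congr 2
              omega
    -- combine: S(Qf)^m ≤ r'^2 * S f^m
    have hmain : ∀ f : V → ℝ, S (Q.mulVec f) ^ m ≤ r' ^ 2 * S f ^ m := by
      intro f
      have hQm : S ((Q ^ m).mulVec f) ≤ r' ^ 2 * S f := by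
        have hsplit : (Q ^ m).mulVec f = (Q ^ (m - N)).mulVec ((Q ^ N).mulVec f) := by
          rw [Matrix.mulVec_mulVec, ← pow_add, Nat.sub_add_cancel hNm]
        rw [hsplit]
        refine (hcontr (m - N) _).trans ?_
        exact schur (Q ^ N) π hπpos (pow_entry_nonneg Q hQnonneg N)
          (pow_sym Q π hsym N) r' hr'0.le hrowler' f
      calc S (Q.mulVec f) ^ m ≤ S ((Q ^ m).mulVec f) * S f ^ (m - 1) := by
            have := hdbl N f
            rw [← hmdef] at this
            simpa [pow_one] using this
        _ ≤ (r' ^ 2 * S f) * S f ^ (m - 1) :=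
            mul_le_mul_of_nonneg_right hQm (pow_nonneg (hS0 f) _)
        _ = r' ^ 2 * S f ^ m := by
            rw [mul_assoc, ← pow_succ']
            congr 2
            omega
    -- extract the m-th root
    set c2 : ℝ := r' ^ ((2:ℝ) / m) with hc2def
    have hc2pos : 0 < c2 := Real.rpow_pos_of_pos hr'0 _
    have hc2m : c2 ^ m = r' ^ 2 := by
      rw [hc2def, ← Real.rpow_natCast (r' ^ ((2:ℝ) / m)) m, ← Real.rpow_mul hr'0.le,
        div_mul_cancel₀, Real.rpow_two]
      exact_mod_cast hm0
    have hc2lt : c2 < 1 := by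
      refine Real.rpow_lt_one hr'0.le hr'1 ?_
      have : (0:ℝ) < (m:ℝ) := by exact_mod_cast Nat.pos_of_ne_zero hm0
      positivity
    refine ⟨Real.sqrt c2, ?_, fun f => ?_⟩
    · calc Real.sqrt c2 < Real.sqrt 1 := Real.sqrt_lt_sqrt hc2pos.le hc2lt
        _ = 1 := Real.sqrt_one
    · have hfm : S (Q.mulVec f) ≤ c2 * S f := by
        have h1 : S (Q.mulVec f) ^ m ≤ (c2 * S f) ^ m := by
          rw [mul_pow, hc2m]
          exact hmain f
        exact (pow_le_pow_iff_left₀ (hS0 _) (mul_nonneg hc2pos.le (hS0 f)) hm0).mp h1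
      have : piNorm π (Q.mulVec f) ≤ Real.sqrt (c2 * S f) := Real.sqrt_le_sqrt hfm
      refine this.trans (le_of_eq ?_)
      rw [Real.sqrt_mul hc2pos.le]
      rfl
end

section
/- Let Q be a self-adjoint substochastic operator on ℓ²(V,π) with ‖Q‖ < 1, and let h_x, h_y be nonnegative elements of ℓ²(V,π). Then for every n ≥ 2, ⟨h_x, Q^{n−2} h_y⟩ ≤ (2/n) · ⟨h_x, (I−Q²)^{−1} Q^{2m} h_x⟩^{1/2} · ⟨h_y, (I−Q²)^{−1} Q^{2m} h_y⟩^{1/2}, where m = ⌊(n−2)/4⌋. -/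
open scoped BigOperators

/-- The inner product of `ℓ²(V, π)` for a finite set `V` with weights `π`. -/
noncomputable def piInner {V : Type*} [Fintype V] (π : V → ℝ) (f g : V → ℝ) : ℝ :=
  ∑ z, π z * f z * g z

lemma natBern (j a b : ℕ) : a^j + j * a^(j-1) * b ≤ (a+b)^j := by
  induction j with
  | zero => simp
  | succ j ih =>
    cases j with
    | zero => simp [pow_succ]
    | succ i =>
      have key : (a^(i+1) + (i+1)*a^i*b)*(a+b)
          = a^(i+2) + (i+2)*a^(i+1)*b + (i+1)*a^i*b^2 := by
        rw [show a^(i+2) = a^i*a*a by rw [← pow_succ, ← pow_succ],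
            show a^(i+1) = a^i*a from pow_succ a i]
        ring
      have h2 : a^(i+2) + (i+2)*a^(i+1)*b ≤ (a^(i+1) + (i+1)*a^i*b)*(a+b) := by
        rw [key]; omega
      refine h2.trans ?_
      calc (a^(i+1) + (i+1)*a^i*b)*(a+b)
          ≤ (a+b)^(i+1) * (a+b) := by
            apply Nat.mul_le_mul_right
            simpa using ih
        _ = (a+b)^(i+2) := (pow_succ _ _).symm

lemma natKey (k : ℕ) (hk : 2 ≤ k) : 4 * k^k ≤ (k+2)^k := by
  rcases Nat.even_or_odd k with ⟨j, hj⟩ | ⟨j, hj⟩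
  · obtain ⟨i, rfl⟩ : ∃ i, j = i + 1 := ⟨j - 1, by omega⟩
    have hk' : k = 2*i+2 := by omega
    subst hk'
    have hb := natBern (i+1) (2*i+2) 2
    simp only [Nat.add_sub_cancel] at hb
    have h1 : 2 * (2*i+2)^(i+1) ≤ (2*i+2+2)^(i+1) := by
      have : (2*i+2)^(i+1) + (i+1) * (2*i+2)^i * 2 = 2 * (2*i+2)^(i+1) := by
        rw [pow_succ]; ring
      omega
    calc 4 * (2*i+2)^(2*i+2) = (2 * (2*i+2)^(i+1)) * (2 * (2*i+2)^(i+1)) := by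
          rw [show (2*i+2) = (i+1)+(i+1) by omega, pow_add]; ring
      _ ≤ (2*i+2+2)^(i+1) * (2*i+2+2)^(i+1) := Nat.mul_le_mul h1 h1
      _ = (2*i+2+2)^(2*i+2) := by rw [← pow_add]; congr 1 <;> omega
  · obtain ⟨i, rfl⟩ : ∃ i, j = i + 1 := ⟨j - 1, by omega⟩
    have hk' : k = 2*i+3 := by omega
    subst hk'
    have hb := natBern (i+1) (2*i+3) 2
    simp only [Nat.add_sub_cancel] at hb
    have h1 : (2*i+3)^i * (4*i+5) ≤ (2*i+5)^(i+1) := by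
      have e : (2*i+3)^(i+1) + (i+1) * (2*i+3)^i * 2 = (2*i+3)^i * (4*i+5) := by
        rw [pow_succ]; ring
      calc (2*i+3)^i * (4*i+5) = (2*i+3)^(i+1) + (i+1) * (2*i+3)^i * 2 := e.symm
        _ ≤ (2*i+3+2)^(i+1) := hb
        _ = (2*i+5)^(i+1) := by congr 1
    have h4 : 4 * (2*i+3)^3 ≤ (4*i+5)^2 * (2*i+5) := by nlinarith [sq_nonneg i, Nat.zero_le i]
    calc 4 * (2*i+3)^(2*i+3)
        = 4 * (2*i+3)^3 * ((2*i+3)^i * (2*i+3)^i) := by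
          rw [show (2*i+3 : ℕ) = 3+(i+i) from by omega, pow_add, pow_add]
          ring
      _ ≤ (4*i+5)^2 * (2*i+5) * ((2*i+3)^i * (2*i+3)^i) := Nat.mul_le_mul_right _ h4
      _ = ((2*i+3)^i * (4*i+5)) * ((2*i+3)^i * (4*i+5)) * (2*i+5) := by ring
      _ ≤ (2*i+5)^(i+1) * (2*i+5)^(i+1) * (2*i+5) := by
          exact Nat.mul_le_mul (Nat.mul_le_mul h1 h1) (le_refl _)
      _ = (2*i+5)^(2*i+3) := by rw [← pow_add, ← pow_succ]; congr 1; omega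

lemma natKey2 (k : ℕ) (hk : 1 ≤ k) : 4 * (k+1)^2 * k^k ≤ (k+2)^(k+2) := by
  rcases eq_or_lt_of_le hk with h | h
  · subst h; norm_num
  · have h2 : 2 ≤ k := h
    calc 4 * (k+1)^2 * k^k = (k+1)^2 * (4 * k^k) := by ring
      _ ≤ (k+2)^2 * (k+2)^k := Nat.mul_le_mul (Nat.pow_le_pow_left (by omega) 2) (natKey k h2)
      _ = (k+2)^(k+2) := by rw [← pow_add]; congr 1; omega

lemma L1 (k : ℕ) (t : ℝ) (h0 : 0 ≤ t) (h1 : t ≤ 1) :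
    t^k * (1 - t^2) ≤ 1/(k+1 : ℝ) := by
  rcases Nat.eq_zero_or_pos k with rfl | hk
  · norm_num; nlinarith
  ·
    have hK1 : (1:ℝ) ≤ (k:ℝ) := by exact_mod_cast hk
    set K : ℝ := (k : ℝ) with hK
    have hK2 : (0:ℝ) < K + 2 := by linarith
    have ht2 : t^2 ≤ 1 := by nlinarith
    have hu0 : (0:ℝ) ≤ t^2 := sq_nonneg t
    set u : ℝ := t^2 with hu
    have hy0 : (0:ℝ) ≤ K*(1-u)/2 := by
      have : (0:ℝ) ≤ 1 - u := by linarith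
      positivity
    have hw1 : (0:ℝ) ≤ K/(K+2) := by positivity
    have hw2 : (0:ℝ) ≤ 2/(K+2) := by positivity
    have hw : K/(K+2) + 2/(K+2) = 1 := by field_simp
    have hgm := Real.geom_mean_le_arith_mean2_weighted hw1 hw2 hu0 hy0 hw
    have hrhs : K/(K+2) * u + 2/(K+2) * (K*(1-u)/2) = K/(K+2) := by
      field_simp; ring
    rw [hrhs] at hgm
    have hbase0 : (0:ℝ) ≤ u ^ (K/(K+2)) * (K*(1-u)/2) ^ (2/(K+2)) :=
      mul_nonneg (Real.rpow_nonneg hu0 _) (Real.rpow_nonneg hy0 _)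
    have hpow := pow_le_pow_left₀ hbase0 hgm (k+2)
    have hL : (u ^ (K/(K+2)) * (K*(1-u)/2) ^ (2/(K+2)))^(k+2)
        = u^k * (K*(1-u)/2)^2 := by
      rw [mul_pow, ← Real.rpow_natCast (u ^ (K/(K+2))) (k+2),
          ← Real.rpow_natCast ((K*(1-u)/2) ^ (2/(K+2))) (k+2),
          ← Real.rpow_mul hu0, ← Real.rpow_mul hy0]
      have e1 : K/(K+2) * ((k:ℝ)+2) = K := by
        push_cast
        field_simp
        rfl
      have e2 : 2/(K+2) * ((k:ℝ)+2) = 2 := by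
        push_cast
        field_simp
        rfl
      push_cast
      rw [e1, e2]
      rw [show (K:ℝ) = ((k:ℕ):ℝ) from rfl, Real.rpow_natCast,
          show (2:ℝ) = ((2:ℕ):ℝ) by norm_num, Real.rpow_natCast]
    rw [hL] at hpow
    -- hpow : u^k * (K*(1-u)/2)^2 ≤ (K/(K+2))^(k+2)
    have hKpos : (0:ℝ) < K := by linarith
    have hmain : u^k * (1-u)^2 ≤ 4 * K^k / (K+2)^(k+2) := by
      have hexp : u^k * (K*(1-u)/2)^2 = (K^2/4) * (u^k * (1-u)^2) := by ring
      rw [hexp, div_pow] at hpow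
      have e0 : u^k*(1-u)^2 = (4/K^2) * (K^2/4 * (u^k*(1-u)^2)) := by
        field_simp
      rw [e0]
      have step : (4/K^2) * (K^2/4 * (u^k*(1-u)^2)) ≤ (4/K^2) * (K^(k+2)/(K+2)^(k+2)) :=
        mul_le_mul_of_nonneg_left hpow (by positivity)
      refine step.trans_eq ?_
      have e3 : K^(k+2) = K^k * K^2 := by ring
      rw [e3]
      field_simp
    have hnat : 4 * (K+1)^2 * K^k ≤ (K+2)^(k+2) := by
      have h := natKey2 k hk
      rw [hK]
      push_cast
      exact_mod_cast h
    have hfin : u^k * (1-u)^2 ≤ (1/(K+1))^2 := by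
      refine hmain.trans ?_
      rw [div_le_iff₀ (by positivity), div_pow, one_pow, div_mul_eq_mul_div,
          le_div_iff₀ (by positivity), one_mul]
      nlinarith [hnat]
    have hL2 : (t^k * (1-t^2))^2 = u^k * (1-u)^2 := by rw [hu]; ring
    have hgoal : (t^k * (1-t^2))^2 ≤ (1/(K+1))^2 := by rw [hL2]; exact hfin
    have hL0 : 0 ≤ t^k * (1 - t^2) := mul_nonneg (pow_nonneg h0 k) (by nlinarith)
    have hR0 : (0:ℝ) ≤ 1/(K+1) := by positivity
    show t^k * (1-t^2) ≤ 1/(K+1)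
    have h := Real.sqrt_le_sqrt hgoal
    rwa [Real.sqrt_sq hL0, Real.sqrt_sq hR0] at h

lemma L2 (N m r : ℕ) (hN : N = 4*m + r) (μ : ℝ) (hμ : |μ| < 1) :
    |μ|^N ≤ (2/((N:ℝ)+2)) * ((1-μ^2)⁻¹ * μ^(2*m)) := by
  have habs : 0 ≤ |μ| := abs_nonneg μ
  have hμ2 : μ^2 < 1 := by rw [← sq_abs]; nlinarith
  have h1μ : 0 < 1 - μ^2 := by linarith
  have hev : |μ|^(2*m) = μ^(2*m) := by
    rw [pow_mul, pow_mul, sq_abs]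
  have hevpos : 0 ≤ μ^(2*m) := by rw [← hev]; positivity
  have hsplit : |μ|^N = μ^(2*m) * |μ|^(2*m+r) := by
    rw [← hev, ← pow_add]
    congr 1
    omega
  have hL1 : |μ|^(2*m+r) * (1 - |μ|^2) ≤ 1/((2*m+r : ℕ)+1 : ℝ) := L1 (2*m+r) |μ| habs hμ.le
  have h2n : (1:ℝ)/((2*m+r : ℕ)+1 : ℝ) ≤ 2/((N:ℝ)+2) := by
    rw [div_le_div_iff₀ (by positivity) (by positivity)]
    have : (N:ℝ) = 4*(m:ℝ) + (r:ℝ) := by exact_mod_cast hN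
    push_cast
    rw [this]
    linarith [Nat.cast_nonneg (α := ℝ) r]
  have hkey : |μ|^N * (1 - μ^2) ≤ (2/((N:ℝ)+2)) * μ^(2*m) := by
    rw [hsplit, mul_assoc]
    have : |μ|^(2*m+r) * (1 - μ^2) ≤ 2/((N:ℝ)+2) := by
      rw [← sq_abs μ]
      exact hL1.trans h2n
    calc μ^(2*m) * (|μ|^(2*m+r) * (1 - μ^2)) ≤ μ^(2*m) * (2/((N:ℝ)+2)) :=
          mul_le_mul_of_nonneg_left this hevpos
      _ = (2/((N:ℝ)+2)) * μ^(2*m) := by ring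
  calc |μ|^N = (|μ|^N * (1-μ^2)) * (1-μ^2)⁻¹ := by
        field_simp
    _ ≤ ((2/((N:ℝ)+2)) * μ^(2*m)) * (1-μ^2)⁻¹ :=
        mul_le_mul_of_nonneg_right hkey (by positivity)
    _ = (2/((N:ℝ)+2)) * ((1-μ^2)⁻¹ * μ^(2*m)) := by ring


lemma expandAux {V : Type*} [Fintype V] [DecidableEq V]
    (B : OrthonormalBasis V ℝ (EuclideanSpace ℝ V)) (M : Matrix V V ℝ) (ν : V → ℝ)
    (hM : ∀ i, M.mulVec (fun z => B i z) = ν i • (fun z => B i z)) (f g : V → ℝ) :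
    ∑ z, f z * (M.mulVec g) z
      = ∑ i, ν i * ((∑ z, B i z * f z) * (∑ z, B i z * g z)) := by
  have hequiv : ∀ (x : EuclideanSpace ℝ V) (w : V),
      (WithLp.linearEquiv 2 ℝ (V → ℝ)) x w = x w := fun _ _ => rfl
  have hinner : ∀ (i : V) (h : V → ℝ),
      (inner ℝ (B i) (WithLp.toLp 2 h) : ℝ) = ∑ z, B i z * h z := by
    intro i h
    rw [PiLp.inner_apply]
    simp [RCLike.inner_apply]
    exact Finset.sum_congr rfl fun z _ => mul_comm _ _
  have hg : ∀ w, g w = ∑ i, (∑ z, B i z * g z) * B i w := by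
    intro w
    have h := congrArg (WithLp.linearEquiv 2 ℝ (V → ℝ))
      (B.sum_repr' (WithLp.toLp 2 g))
    rw [map_sum] at h
    simp only [map_smul] at h
    have h2 := congrFun h w
    rw [hequiv, Finset.sum_apply] at h2
    simp only [Pi.smul_apply, smul_eq_mul] at h2
    rw [← h2]
    refine Finset.sum_congr rfl fun i _ => ?_
    rw [hequiv, hinner]
  have hMg : ∀ z, (M.mulVec g) z = ∑ i, (∑ w, B i w * g w) * (ν i * B i z) := by
    intro z
    rw [Matrix.mulVec, dotProduct]
    calc ∑ w, M z w * g w = ∑ w, M z w * (∑ i, (∑ u, B i u * g u) * B i w) := by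
          congr 1; funext w; rw [← hg w]
      _ = ∑ w, ∑ i, (∑ u, B i u * g u) * (M z w * B i w) := by
          congr 1; funext w
          rw [Finset.mul_sum]
          congr 1; funext i
          ring
      _ = ∑ i, ∑ w, (∑ u, B i u * g u) * (M z w * B i w) := Finset.sum_comm
      _ = ∑ i, (∑ w, B i w * g w) * (ν i * B i z) := by
          congr 1; funext i
          rw [← Finset.mul_sum]
          congr 1
          have := congrFun (hM i) z
          rw [Matrix.mulVec, dotProduct] at this
          rw [this]
          simp [smul_eq_mul]
  calc ∑ z, f z * (M.mulVec g) z
      = ∑ z, ∑ i, f z * ((∑ w, B i w * g w) * (ν i * B i z)) := by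
        congr 1; funext z
        rw [hMg z, Finset.mul_sum]
    _ = ∑ i, ∑ z, f z * ((∑ w, B i w * g w) * (ν i * B i z)) := Finset.sum_comm
    _ = ∑ i, ν i * ((∑ z, B i z * f z) * (∑ z, B i z * g z)) := by
        congr 1; funext i
        simp only [Finset.mul_sum, Finset.sum_mul]
        conv_rhs => rw [Finset.sum_comm]
        congr 1; funext z
        congr 1; funext w
        ring

lemma reprAux {V : Type*} [Fintype V] [DecidableEq V]
    (B : OrthonormalBasis V ℝ (EuclideanSpace ℝ V)) (g : V → ℝ) (w : V) :
    g w = ∑ i, (∑ z, B i z * g z) * B i w := by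
  have hequiv : ∀ (x : EuclideanSpace ℝ V) (w : V),
      (WithLp.linearEquiv 2 ℝ (V → ℝ)) x w = x w := fun _ _ => rfl
  have hinner : ∀ (i : V) (h : V → ℝ),
      (inner ℝ (B i) (WithLp.toLp 2 h) : ℝ) = ∑ z, B i z * h z := by
    intro i h
    rw [PiLp.inner_apply]
    simp [RCLike.inner_apply]
    exact Finset.sum_congr rfl fun z _ => mul_comm _ _
  have h := congrArg (WithLp.linearEquiv 2 ℝ (V → ℝ))
    (B.sum_repr' (WithLp.toLp 2 g))
  rw [map_sum] at h
  simp only [map_smul] at h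
  have h2 := congrFun h w
  rw [hequiv, Finset.sum_apply] at h2
  simp only [Pi.smul_apply, smul_eq_mul] at h2
  rw [← h2]
  refine Finset.sum_congr rfl fun i _ => ?_
  rw [hequiv, hinner]

lemma mulVecSum {V : Type*} [Fintype V] (A : Matrix V V ℝ) (c : V → ℝ) (x : V → V → ℝ) :
    A.mulVec (fun z => ∑ i, c i * x i z) = fun z => ∑ i, c i * (A.mulVec (x i)) z := by
  funext z
  simp only [Matrix.mulVec, dotProduct, Finset.mul_sum]
  rw [Finset.sum_comm]
  congr 1; funext i
  congr 1; funext y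
  ring

lemma transferAux {V : Type*} [Fintype V] [DecidableEq V] (π d : V → ℝ)
    (hd2 : ∀ z, d z ^ 2 = π z) (hd0 : ∀ z, 0 < d z) (M : Matrix V V ℝ) (f g : V → ℝ) :
    piInner π f ((Matrix.diagonal (fun z => (d z)⁻¹) * M * Matrix.diagonal d).mulVec g)
      = ∑ z, (d z * f z) * (M.mulVec (fun w => d w * g w)) z := by
  unfold piInner
  refine Finset.sum_congr rfl fun z _ => ?_
  have h1 : (Matrix.diagonal (fun z => (d z)⁻¹) * M * Matrix.diagonal d).mulVec g
      = fun z => (d z)⁻¹ * (M.mulVec (fun w => d w * g w)) z := by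
    funext u
    rw [← Matrix.mulVec_mulVec, ← Matrix.mulVec_mulVec]
    rw [Matrix.mulVec_diagonal]
    congr 2
    funext w
    rw [Matrix.mulVec_diagonal]
  rw [h1]
  have hπ : π z = d z ^ 2 := (hd2 z).symm
  rw [hπ]
  have hdz : d z ≠ 0 := (hd0 z).ne'
  field_simp

/-- Cauchy–Schwarz-type bound `⟨h_x, Q^{n−2}h_y⟩ ≤ (2/n)·⟨h_x,(I−Q²)⁻¹Q^{2m}h_x⟩^{1/2}
⟨h_y,(I−Q²)⁻¹Q^{2m}h_y⟩^{1/2}` with `m = ⌊(n−2)/4⌋`, for a self-adjoint substochastic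
operator `Q` on `ℓ²(V,π)` with `‖Q‖ < 1` and nonnegative `h_x, h_y`. -/
theorem inner_pow_le_of_substochastic {V : Type*} [Fintype V] [DecidableEq V]
    (Q : Matrix V V ℝ) (π : V → ℝ)
    (hπpos : ∀ z, 0 < π z)
    (hQnonneg : ∀ z z', 0 ≤ Q z z')
    (hsym : ∀ z z', π z * Q z z' = π z' * Q z' z)
    (hsub : ∀ z, ∑ z', Q z z' ≤ 1)
    (hnorm : ∃ c : ℝ, c < 1 ∧ ∀ f : V → ℝ, piNorm π (Q.mulVec f) ≤ c * piNorm π f)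
    (hx hy : V → ℝ) (hhx : ∀ z, 0 ≤ hx z) (hhy : ∀ z, 0 ≤ hy z)
    (n : ℕ) (hn : 2 ≤ n) :
    piInner π hx ((Q ^ (n - 2)).mulVec hy) ≤
      (2 / n) *
        Real.sqrt (piInner π hx (((1 - Q ^ 2)⁻¹ * Q ^ (2 * ((n - 2) / 4))).mulVec hx)) *
        Real.sqrt (piInner π hy (((1 - Q ^ 2)⁻¹ * Q ^ (2 * ((n - 2) / 4))).mulVec hy)) := by
  obtain ⟨c, hc1, hc⟩ := hnorm
  set N := n - 2 with hNdef
  set m := N / 4 with hmdef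
  set r := N % 4 with hrdef
  have hNr : N = 4 * m + r := by omega
  set d : V → ℝ := fun z => Real.sqrt (π z) with hddef
  have hd : ∀ z, 0 < d z := fun z => Real.sqrt_pos.2 (hπpos z)
  have hd2 : ∀ z, d z ^ 2 = π z := fun z => Real.sq_sqrt (hπpos z).le
  set D : Matrix V V ℝ := Matrix.diagonal d with hDdef
  set E : Matrix V V ℝ := Matrix.diagonal (fun z => (d z)⁻¹) with hEdef
  have hDE : D * E = 1 := by
    have h1 : (fun z => d z * (d z)⁻¹) = fun _ : V => (1:ℝ) :=
      funext fun z => mul_inv_cancel₀ (hd z).ne'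
    rw [hDdef, hEdef, Matrix.diagonal_mul_diagonal, h1, Matrix.diagonal_one]
  have hED : E * D = 1 := by
    have h1 : (fun z => (d z)⁻¹ * d z) = fun _ : V => (1:ℝ) :=
      funext fun z => inv_mul_cancel₀ (hd z).ne'
    rw [hDdef, hEdef, Matrix.diagonal_mul_diagonal, h1, Matrix.diagonal_one]
  set S : Matrix V V ℝ := D * Q * E with hSdef
  have hSentry : ∀ i j, S i j = d i * Q i j * (d j)⁻¹ := by
    intro i j
    rw [hSdef, hDdef, hEdef, Matrix.mul_diagonal, Matrix.diagonal_mul]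
  have hSherm : S.IsHermitian := by
    show S.conjTranspose = S
    ext i j
    rw [Matrix.conjTranspose_apply, hSentry, hSentry]
    have h := hsym j i
    rw [← hd2, ← hd2] at h
    have hdi : d i ≠ 0 := (hd i).ne'
    have hdj : d j ≠ 0 := (hd j).ne'
    show d j * Q j i * (d i)⁻¹ = d i * Q i j * (d j)⁻¹
    field_simp
    linear_combination h
  have hSpow : ∀ j : ℕ, S ^ j = D * Q ^ j * E := by
    intro j
    induction j with
    | zero => rw [pow_zero, pow_zero, Matrix.mul_one, hDE]
    | succ j ih =>
      rw [pow_succ, pow_succ, ih, hSdef]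
      calc D * Q ^ j * E * (D * Q * E) = D * Q ^ j * (E * D) * Q * E := by
            simp only [Matrix.mul_assoc]
        _ = D * (Q ^ j * Q) * E := by rw [hED, Matrix.mul_one]; simp only [Matrix.mul_assoc]
  have hA1 : ∀ X : Matrix V V ℝ, E * (D * X) = X := fun X => by
    rw [← Matrix.mul_assoc, hED, Matrix.one_mul]
  have hA2 : ∀ X : Matrix V V ℝ, X * E * D = X := fun X => by
    rw [Matrix.mul_assoc, hED, Matrix.mul_one]
  have hA3 : ∀ X : Matrix V V ℝ, D * (E * X) = X := fun X => by
    rw [← Matrix.mul_assoc, hDE, Matrix.one_mul]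
  have hA4 : ∀ X : Matrix V V ℝ, X * D * E = X := fun X => by
    rw [Matrix.mul_assoc, hDE, Matrix.mul_one]
  have hQpow : ∀ j : ℕ, Q ^ j = E * S ^ j * D := by
    intro j
    rw [hSpow j, Matrix.mul_assoc D (Q ^ j) E, hA1 (Q ^ j * E), hA2]
  set B := hSherm.eigenvectorBasis with hBdef
  set μ := hSherm.eigenvalues with hμdef
  have hSB : ∀ i, S.mulVec (fun z => B i z) = μ i • (fun z => B i z) :=
    fun i => hSherm.mulVec_eigenvectorBasis i
  -- norm contraction for S
  have hnormS : ∀ v : V → ℝ,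
      Real.sqrt (∑ z, (S.mulVec v) z ^ 2) ≤ c * Real.sqrt (∑ z, v z ^ 2) := by
    intro v
    have hSv : S.mulVec v = fun z => d z * (Q.mulVec (fun w => (d w)⁻¹ * v w)) z := by
      rw [hSdef, ← Matrix.mulVec_mulVec, ← Matrix.mulVec_mulVec]
      funext z
      rw [hDdef, Matrix.mulVec_diagonal]
      congr 2
      funext w
      rw [hEdef, Matrix.mulVec_diagonal]
    have h1 : ∑ z, (S.mulVec v) z ^ 2 = ∑ z, π z * (Q.mulVec (fun w => (d w)⁻¹ * v w)) z ^ 2 := by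
      rw [hSv]
      refine Finset.sum_congr rfl fun z _ => ?_
      rw [mul_pow, hd2]
    have h2 : ∑ z, π z * ((d z)⁻¹ * v z) ^ 2 = ∑ z, v z ^ 2 := by
      refine Finset.sum_congr rfl fun z _ => ?_
      rw [mul_pow, ← hd2 z]
      have : d z ≠ 0 := (hd z).ne'
      field_simp
    have h3 := hc (fun w => (d w)⁻¹ * v w)
    unfold piNorm at h3
    rw [h2] at h3
    rw [h1]
    exact h3
  -- eigenvalue bound
  have hμlt : ∀ i, |μ i| < 1 := by
    intro i
    have hBn : ∑ z, (B i) z ^ 2 = 1 := by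
      have h1 : ‖B i‖ = 1 := B.orthonormal.1 i
      rw [EuclideanSpace.norm_eq] at h1
      have h2 : ∑ z, ‖(B i) z‖ ^ 2 = 1 := by
        have := congrArg (fun t : ℝ => t ^ 2) h1
        simp only [one_pow] at this
        rw [← this, Real.sq_sqrt]
        positivity
      rw [← h2]
      refine Finset.sum_congr rfl fun z _ => ?_
      rw [Real.norm_eq_abs, sq_abs]
    have h := hnormS (fun z => B i z)
    rw [hSB i] at h
    simp only [Pi.smul_apply, smul_eq_mul] at h
    have hL : ∑ z, (μ i * B i z) ^ 2 = μ i ^ 2 * ∑ z, (B i) z ^ 2 := by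
      rw [Finset.mul_sum]
      refine Finset.sum_congr rfl fun z _ => ?_
      ring
    rw [hL, hBn, mul_one, Real.sqrt_one, mul_one, Real.sqrt_sq_eq_abs] at h
    exact lt_of_le_of_lt h hc1
  have h1μ : ∀ i, 0 < 1 - μ i ^ 2 := by
    intro i
    have := hμlt i
    have h2 : μ i ^ 2 < 1 := by rw [← sq_abs]; nlinarith [abs_nonneg (μ i)]
    linarith
  -- action of powers of S
  have hSBpow : ∀ (j : ℕ) (i : V), (S ^ j).mulVec (fun z => B i z) = (μ i ^ j) • (fun z => B i z) := by
    intro j i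
    induction j with
    | zero => rw [pow_zero, pow_zero, Matrix.one_mulVec, one_smul]
    | succ j ih =>
      rw [pow_succ, ← Matrix.mulVec_mulVec, hSB i, Matrix.mulVec_smul, ih,
        smul_smul, pow_succ]
      congr 1
      ring
  have h1SB : ∀ i, (1 - S ^ 2).mulVec (fun z => B i z) = (1 - μ i ^ 2) • (fun z => B i z) := by
    intro i
    rw [Matrix.sub_mulVec, Matrix.one_mulVec, hSBpow 2 i, sub_smul, one_smul]
  -- invertibility of 1 - S^2
  have hdet : IsUnit (1 - S ^ 2).det := by
    rw [← Matrix.isUnit_iff_isUnit_det, ← Matrix.mulVec_surjective_iff_isUnit]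
    intro w
    refine ⟨fun z => ∑ i, ((1 - μ i ^ 2)⁻¹ * (∑ u, B i u * w u)) * B i z, ?_⟩
    rw [mulVecSum (1 - S ^ 2) (fun i => (1 - μ i ^ 2)⁻¹ * (∑ u, B i u * w u))
      (fun i z => B i z)]
    funext z
    have hterm : ∀ i, ((1 - μ i ^ 2)⁻¹ * (∑ u, B i u * w u)) * ((1 - S ^ 2).mulVec (fun z => B i z)) z
        = (∑ u, B i u * w u) * B i z := by
      intro i
      rw [h1SB i]
      simp only [Pi.smul_apply, smul_eq_mul]
      have : (1 - μ i ^ 2) ≠ 0 := (h1μ i).ne'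
      field_simp
    calc (∑ i, ((1 - μ i ^ 2)⁻¹ * (∑ u, B i u * w u)) * ((1 - S ^ 2).mulVec (fun z => B i z)) z)
        = ∑ i, (∑ u, B i u * w u) * B i z := Finset.sum_congr rfl fun i _ => hterm i
      _ = w z := (reprAux B w z).symm
  -- action of (1 - S^2)⁻¹
  have hSinv : ∀ i, (1 - S ^ 2)⁻¹.mulVec (fun z => B i z)
      = (1 - μ i ^ 2)⁻¹ • (fun z => B i z) := by
    intro i
    have he : (fun z => B i z) = (1 - S ^ 2).mulVec ((1 - μ i ^ 2)⁻¹ • (fun z => B i z)) := by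
      rw [Matrix.mulVec_smul, h1SB i, smul_smul, inv_mul_cancel₀ (h1μ i).ne', one_smul]
    conv_lhs => rw [he]
    rw [Matrix.mulVec_mulVec, Matrix.nonsing_inv_mul _ hdet, Matrix.one_mulVec]
  -- action of (1-S^2)⁻¹ * S^(2m)
  have hMact : ∀ i, ((1 - S ^ 2)⁻¹ * S ^ (2 * m)).mulVec (fun z => B i z)
      = ((1 - μ i ^ 2)⁻¹ * μ i ^ (2 * m)) • (fun z => B i z) := by
    intro i
    rw [← Matrix.mulVec_mulVec, hSBpow (2 * m) i, Matrix.mulVec_smul, hSinv i,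
      smul_smul]
    congr 1
    ring
  -- conjugation identities
  have hQinvconj : (1 - Q ^ 2)⁻¹ = E * (1 - S ^ 2)⁻¹ * D := by
    apply Matrix.inv_eq_right_inv
    have h12 : 1 - Q ^ 2 = E * (1 - S ^ 2) * D := by
      rw [Matrix.mul_sub, Matrix.sub_mul, Matrix.mul_one, hED, hQpow 2]
    rw [h12]
    calc E * (1 - S ^ 2) * D * (E * (1 - S ^ 2)⁻¹ * D)
        = E * ((1 - S ^ 2) * (D * (E * ((1 - S ^ 2)⁻¹ * D)))) := by
          simp only [Matrix.mul_assoc]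
      _ = E * ((1 - S ^ 2) * ((1 - S ^ 2)⁻¹ * D)) := by rw [hA3]
      _ = E * (((1 - S ^ 2) * (1 - S ^ 2)⁻¹) * D) := by rw [Matrix.mul_assoc]
      _ = E * D := by rw [Matrix.mul_nonsing_inv _ hdet, Matrix.one_mul]
      _ = 1 := hED
  have hconj2 : (1 - Q ^ 2)⁻¹ * Q ^ (2 * m) = E * ((1 - S ^ 2)⁻¹ * S ^ (2 * m)) * D := by
    rw [hQinvconj, hQpow (2 * m)]
    calc E * (1 - S ^ 2)⁻¹ * D * (E * S ^ (2 * m) * D)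
        = E * ((1 - S ^ 2)⁻¹ * (D * (E * (S ^ (2 * m) * D)))) := by
          simp only [Matrix.mul_assoc]
      _ = E * ((1 - S ^ 2)⁻¹ * (S ^ (2 * m) * D)) := by rw [hA3]
      _ = E * ((1 - S ^ 2)⁻¹ * S ^ (2 * m)) * D := by simp only [Matrix.mul_assoc]
  -- coefficients
  set a : V → ℝ := fun i => ∑ z, B i z * (d z * hx z) with hadef
  set b : V → ℝ := fun i => ∑ z, B i z * (d z * hy z) with hbdef
  have e1 : piInner π hx ((Q ^ N).mulVec hy) = ∑ i, μ i ^ N * (a i * b i) := by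
    rw [hQpow N, hEdef, hDdef, transferAux π d hd2 hd (S ^ N) hx hy]
    exact expandAux B (S ^ N) (fun i => μ i ^ N) (fun i => hSBpow N i)
      (fun z => d z * hx z) (fun w => d w * hy w)
  have e2x : piInner π hx (((1 - Q ^ 2)⁻¹ * Q ^ (2 * m)).mulVec hx)
      = ∑ i, ((1 - μ i ^ 2)⁻¹ * μ i ^ (2 * m)) * (a i * a i) := by
    rw [hconj2, hEdef, hDdef, transferAux π d hd2 hd _ hx hx]
    exact expandAux B _ (fun i => (1 - μ i ^ 2)⁻¹ * μ i ^ (2 * m)) hMact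
      (fun z => d z * hx z) (fun w => d w * hx w)
  have e2y : piInner π hy (((1 - Q ^ 2)⁻¹ * Q ^ (2 * m)).mulVec hy)
      = ∑ i, ((1 - μ i ^ 2)⁻¹ * μ i ^ (2 * m)) * (b i * b i) := by
    rw [hconj2, hEdef, hDdef, transferAux π d hd2 hd _ hy hy]
    exact expandAux B _ (fun i => (1 - μ i ^ 2)⁻¹ * μ i ^ (2 * m)) hMact
      (fun z => d z * hy z) (fun w => d w * hy w)
  -- scalar estimates
  have hn0 : (0:ℝ) < (n:ℝ) := by
    have : 0 < n := by omega
    exact_mod_cast this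
  have h2n0 : (0:ℝ) ≤ 2 / (n:ℝ) := by positivity
  have hncast : ((N:ℝ) + 2) = (n:ℝ) := by
    have : N + 2 = n := by omega
    exact_mod_cast this
  set F2 : V → ℝ := fun i => Real.sqrt (|μ i| ^ N) * |a i| with hF2def
  set G2 : V → ℝ := fun i => Real.sqrt (|μ i| ^ N) * |b i| with hG2def
  set Sa : ℝ := ∑ i, ((1 - μ i ^ 2)⁻¹ * μ i ^ (2 * m)) * (a i * a i) with hSadef
  set Sb : ℝ := ∑ i, ((1 - μ i ^ 2)⁻¹ * μ i ^ (2 * m)) * (b i * b i) with hSbdef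
  have hwnn : ∀ i, (0:ℝ) ≤ |μ i| ^ N := fun i => pow_nonneg (abs_nonneg _) N
  have h1 : ∑ i, μ i ^ N * (a i * b i) ≤ ∑ i, F2 i * G2 i := by
    refine Finset.sum_le_sum fun i _ => ?_
    have hss : Real.sqrt (|μ i| ^ N) * Real.sqrt (|μ i| ^ N) = |μ i| ^ N :=
      Real.mul_self_sqrt (hwnn i)
    calc μ i ^ N * (a i * b i) ≤ |μ i ^ N * (a i * b i)| := le_abs_self _
      _ = |μ i| ^ N * (|a i| * |b i|) := by rw [abs_mul, abs_mul, abs_pow]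
      _ = (Real.sqrt (|μ i| ^ N) * Real.sqrt (|μ i| ^ N)) * (|a i| * |b i|) := by rw [hss]
      _ = F2 i * G2 i := by rw [hF2def, hG2def]; ring
  have h2 : ∑ i, F2 i * G2 i ≤ Real.sqrt (∑ i, F2 i ^ 2) * Real.sqrt (∑ i, G2 i ^ 2) := by
    have hcs := Finset.sum_mul_sq_le_sq_mul_sq Finset.univ F2 G2
    calc ∑ i, F2 i * G2 i ≤ |∑ i, F2 i * G2 i| := le_abs_self _
      _ = Real.sqrt ((∑ i, F2 i * G2 i) ^ 2) := (Real.sqrt_sq_eq_abs _).symm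
      _ ≤ Real.sqrt ((∑ i, F2 i ^ 2) * (∑ i, G2 i ^ 2)) := Real.sqrt_le_sqrt hcs
      _ = Real.sqrt (∑ i, F2 i ^ 2) * Real.sqrt (∑ i, G2 i ^ 2) := by
          rw [Real.sqrt_mul (by positivity)]
  have hsq : ∀ (v : V → ℝ) (i : V),
      (Real.sqrt (|μ i| ^ N) * |v i|) ^ 2 = |μ i| ^ N * (v i * v i) := by
    intro v i
    rw [mul_pow, Real.sq_sqrt (hwnn i), sq_abs]
    ring
  have hterm : ∀ (v : V → ℝ) (i : V),
      |μ i| ^ N * (v i * v i)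
        ≤ (2 / (n:ℝ)) * (((1 - μ i ^ 2)⁻¹ * μ i ^ (2 * m)) * (v i * v i)) := by
    intro v i
    have hL2 := L2 N m r hNr (μ i) (hμlt i)
    rw [hncast] at hL2
    have hvv : (0:ℝ) ≤ v i * v i := mul_self_nonneg _
    calc |μ i| ^ N * (v i * v i)
        ≤ ((2 / (n:ℝ)) * ((1 - μ i ^ 2)⁻¹ * μ i ^ (2 * m))) * (v i * v i) :=
          mul_le_mul_of_nonneg_right hL2 hvv
      _ = (2 / (n:ℝ)) * (((1 - μ i ^ 2)⁻¹ * μ i ^ (2 * m))) * (v i * v i) := by ring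
      _ = (2 / (n:ℝ)) * (((1 - μ i ^ 2)⁻¹ * μ i ^ (2 * m)) * (v i * v i)) := by ring
  have h3 : ∑ i, F2 i ^ 2 ≤ (2 / (n:ℝ)) * Sa := by
    rw [hSadef, Finset.mul_sum]
    refine Finset.sum_le_sum fun i _ => ?_
    rw [hF2def]
    calc (Real.sqrt (|μ i| ^ N) * |a i|) ^ 2 = |μ i| ^ N * (a i * a i) := hsq a i
      _ ≤ (2 / (n:ℝ)) * (((1 - μ i ^ 2)⁻¹ * μ i ^ (2 * m)) * (a i * a i)) := hterm a i
  have h4 : ∑ i, G2 i ^ 2 ≤ (2 / (n:ℝ)) * Sb := by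
    rw [hSbdef, Finset.mul_sum]
    refine Finset.sum_le_sum fun i _ => ?_
    rw [hG2def]
    calc (Real.sqrt (|μ i| ^ N) * |b i|) ^ 2 = |μ i| ^ N * (b i * b i) := hsq b i
      _ ≤ (2 / (n:ℝ)) * (((1 - μ i ^ 2)⁻¹ * μ i ^ (2 * m)) * (b i * b i)) := hterm b i
  rw [e2x, e2y]
  calc piInner π hx ((Q ^ N).mulVec hy) = ∑ i, μ i ^ N * (a i * b i) := e1
    _ ≤ ∑ i, F2 i * G2 i := h1
    _ ≤ Real.sqrt (∑ i, F2 i ^ 2) * Real.sqrt (∑ i, G2 i ^ 2) := h2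
    _ ≤ Real.sqrt ((2 / (n:ℝ)) * Sa) * Real.sqrt ((2 / (n:ℝ)) * Sb) := by
        exact mul_le_mul (Real.sqrt_le_sqrt h3) (Real.sqrt_le_sqrt h4)
          (Real.sqrt_nonneg _) (Real.sqrt_nonneg _)
    _ = 2 / (n:ℝ) * Real.sqrt Sa * Real.sqrt Sb := by
        rw [Real.sqrt_mul h2n0 Sa, Real.sqrt_mul h2n0 Sb]
        calc Real.sqrt (2/(n:ℝ)) * Real.sqrt Sa * (Real.sqrt (2/(n:ℝ)) * Real.sqrt Sb)
            = (Real.sqrt (2/(n:ℝ)) * Real.sqrt (2/(n:ℝ))) * (Real.sqrt Sa * Real.sqrt Sb) := by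
              ring
          _ = (2/(n:ℝ)) * (Real.sqrt Sa * Real.sqrt Sb) := by
              rw [Real.mul_self_sqrt h2n0]
          _ = 2 / (n:ℝ) * Real.sqrt Sa * Real.sqrt Sb := by ring
end

section
/- Suppose a reversible Markov chain (X̂_ℓ) on a state space C with stationary measure π satisfies the uniform bound sup_{x,y} P̂^n(x,y) ≤ C·n^{−d/2} (d ≥ 4), and suppose for each starting point there are nonnegative random variables T₁,…,T_ℓ (times between coarse-grained steps) with E[Σ_{i≤k} T_i] ≤ C'·k for all k. Then for all ℓ ≥ 1 and n ≥ 1, P(X̂_ℓ = 0, Σ_{i≤⌈ℓ/2⌉} T_i ≥ n) ≤ C''·ℓ^{−d/2}·n^{−1}·E(Σ_{i≤⌈ℓ/2⌉} T_i ; Σ_{i≤⌈ℓ/2⌉} T_i ≥ n). -/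
open MeasureTheory
open scoped BigOperators

/-- Lemma 3.1: if the coarse-grained chain has uniformly diffusive `n`-step kernel bounds
and the inter-visit times have linearly bounded expectations, then the probability of
returning to the origin at step `ℓ` while the first `⌈ℓ/2⌉` times sum to at least `n` is
bounded by `C''·ℓ^{−d/2}·n^{−1}` times the corresponding truncated expectation. -/
theorem return_prob_le_truncated_expectation
    {Ω : Type*} [MeasurableSpace Ω] (μ : Measure Ω) [IsProbabilityMeasure μ]
    {S : Type*} [MeasurableSpace S] [MeasurableSingletonClass S] [Countable S]
    (z₀ : S) (Xhat : ℕ → Ω → S) (T : ℕ → Ω → ℝ)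
    (hXmeas : ∀ ℓ, Measurable (Xhat ℓ))
    (hTmeas : ∀ i, Measurable (T i))
    (hTnonneg : ∀ i ω, 0 ≤ T i ω)
    (hTint : ∀ i, Integrable (T i) μ)
    (d : ℕ) (hd : 4 ≤ d)
    (PhatPow : ℕ → S → S → ℝ)
    (hPnonneg : ∀ m x y, 0 ≤ PhatPow m x y)
    (C : ℝ) (hC : 0 < C)
    (hsup : ∀ m : ℕ, 1 ≤ m → ∀ x y : S, PhatPow m x y ≤ C * (m : ℝ) ^ (-(d : ℝ) / 2))
    (C' : ℝ) (hC' : 0 < C')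
    (hexp : ∀ k : ℕ, ∫ ω, (∑ i ∈ Finset.Icc 1 k, T i ω) ∂μ ≤ C' * k)
    (hMarkov : ∀ ℓ n : ℕ, 1 ≤ ℓ → 1 ≤ n →
      (μ {ω | Xhat ℓ ω = z₀ ∧ (n : ℝ) ≤ ∑ i ∈ Finset.Icc 1 ((ℓ + 1) / 2), T i ω}).toReal =
        ∑' x : S,
          (μ {ω | Xhat ((ℓ + 1) / 2) ω = x ∧
              (n : ℝ) ≤ ∑ i ∈ Finset.Icc 1 ((ℓ + 1) / 2), T i ω}).toReal *
            PhatPow (ℓ - (ℓ + 1) / 2) x z₀) :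
    ∃ C'' : ℝ, 0 < C'' ∧ ∀ ℓ n : ℕ, 1 ≤ ℓ → 1 ≤ n →
      (μ {ω | Xhat ℓ ω = z₀ ∧ (n : ℝ) ≤ ∑ i ∈ Finset.Icc 1 ((ℓ + 1) / 2), T i ω}).toReal ≤
        C'' * (ℓ : ℝ) ^ (-(d : ℝ) / 2) * (n : ℝ)⁻¹ *
          ∫ ω in {ω | (n : ℝ) ≤ ∑ i ∈ Finset.Icc 1 ((ℓ + 1) / 2), T i ω},
            (∑ i ∈ Finset.Icc 1 ((ℓ + 1) / 2), T i ω) ∂μ := by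
  classical
  refine ⟨(C + 1) * 4 ^ ((d : ℝ) / 2), by positivity, ?_⟩
  intro ℓ n hℓ hn
  set m := (ℓ + 1) / 2 with hm
  have hSmeas : Measurable (fun ω => ∑ i ∈ Finset.Icc 1 m, T i ω) :=
    Finset.measurable_sum _ fun i _ => hTmeas i
  have hSint : Integrable (fun ω => ∑ i ∈ Finset.Icc 1 m, T i ω) μ :=
    integrable_finset_sum _ fun i _ => hTint i
  have hSnonneg : ∀ ω, 0 ≤ ∑ i ∈ Finset.Icc 1 m, T i ω :=
    fun ω => Finset.sum_nonneg fun i _ => hTnonneg i ω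
  set A : Set Ω := {ω | (n : ℝ) ≤ ∑ i ∈ Finset.Icc 1 m, T i ω} with hAdef
  have hA : MeasurableSet A := measurableSet_le measurable_const hSmeas
  have hn0 : (0 : ℝ) < n := by exact_mod_cast hn
  set I : ℝ := ∫ ω in A, (∑ i ∈ Finset.Icc 1 m, T i ω) ∂μ with hI
  have hInonneg : 0 ≤ I := setIntegral_nonneg hA fun ω _ => hSnonneg ω
  -- Chebyshev / Markov inequality
  have cheb : (μ A).toReal ≤ (n : ℝ)⁻¹ * I := by
    have h1 : ∫ _ω in A, (n : ℝ) ∂μ ≤ I :=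
      setIntegral_mono_on (integrableOn_const (measure_ne_top μ A))
        hSint.integrableOn hA fun ω hω => hω
    rw [setIntegral_const, smul_eq_mul, Measure.real] at h1
    rw [inv_mul_eq_div, le_div_iff₀ hn0]
    linarith [h1]
  have hzle : -(d : ℝ) / 2 ≤ 0 := by
    have : (0:ℝ) ≤ (d:ℝ) := Nat.cast_nonneg d
    linarith
  have hlpos : (0:ℝ) < (ℓ : ℝ) := by exact_mod_cast hℓ
  have hrpow_nonneg : 0 ≤ (ℓ : ℝ) ^ (-(d : ℝ) / 2) := Real.rpow_nonneg hlpos.le _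
  have hfour : (1:ℝ) ≤ (4:ℝ) ^ ((d : ℝ) / 2) :=
    Real.one_le_rpow (by norm_num) (by positivity)
  rcases eq_or_lt_of_le hℓ with hℓ1 | hℓ2
  · -- ℓ = 1 : the set is contained in A, use Chebyshev directly
    have hsub : {ω | Xhat ℓ ω = z₀ ∧ (n : ℝ) ≤ ∑ i ∈ Finset.Icc 1 m, T i ω} ⊆ A :=
      fun ω hω => hω.2
    have h1 : (μ {ω | Xhat ℓ ω = z₀ ∧ (n : ℝ) ≤ ∑ i ∈ Finset.Icc 1 m, T i ω}).toReal ≤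
        (μ A).toReal :=
      ENNReal.toReal_mono (measure_ne_top μ A) (measure_mono hsub)
    have hℓeq : (ℓ : ℝ) = 1 := by exact_mod_cast hℓ1.symm
    rw [hℓeq, Real.one_rpow]
    calc (μ {ω | Xhat ℓ ω = z₀ ∧ (n : ℝ) ≤ ∑ i ∈ Finset.Icc 1 m, T i ω}).toReal
        ≤ (n : ℝ)⁻¹ * I := h1.trans cheb
      _ ≤ ((C + 1) * 4 ^ ((d : ℝ) / 2)) * 1 * ((n : ℝ)⁻¹ * I) := by
          have h2 : (1:ℝ) ≤ (C + 1) * 4 ^ ((d : ℝ) / 2) := by nlinarith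
          nlinarith [h2, mul_nonneg (inv_nonneg.2 hn0.le) hInonneg]
      _ = (C + 1) * 4 ^ ((d : ℝ) / 2) * 1 * (n : ℝ)⁻¹ * I := by ring
  · -- ℓ ≥ 2
    have hℓ2' : 2 ≤ ℓ := hℓ2
    set r := ℓ - m with hr
    have hr1 : 1 ≤ r := by omega
    have hr4 : ℓ ≤ 4 * r := by omega
    have hrpos : (0:ℝ) < (r : ℝ) := by exact_mod_cast hr1
    have hrge : (ℓ : ℝ) / 4 ≤ (r : ℝ) := by
      have : (ℓ : ℝ) ≤ 4 * (r : ℝ) := by exact_mod_cast hr4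
      linarith
    -- kernel bound
    have hker : (r : ℝ) ^ (-(d : ℝ) / 2) ≤ 4 ^ ((d : ℝ) / 2) * (ℓ : ℝ) ^ (-(d : ℝ) / 2) := by
      have h1 : (r : ℝ) ^ (-(d : ℝ) / 2) ≤ ((ℓ : ℝ) / 4) ^ (-(d : ℝ) / 2) :=
        Real.rpow_le_rpow_of_nonpos (by linarith) hrge hzle
      have h2 : ((ℓ : ℝ) / 4) ^ (-(d : ℝ) / 2) =
          (ℓ : ℝ) ^ (-(d : ℝ) / 2) / (4:ℝ) ^ (-(d : ℝ) / 2) :=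
        Real.div_rpow hlpos.le (by norm_num : (0:ℝ) ≤ 4) (-(d : ℝ) / 2)
      have h3 : (4:ℝ) ^ (-(d : ℝ) / 2) = ((4:ℝ) ^ ((d : ℝ) / 2))⁻¹ := by
        rw [neg_div, Real.rpow_neg (by norm_num)]
      rw [h2, h3, div_inv_eq_mul, mul_comm] at h1
      exact h1
    -- decompose the event over intermediate states
    set B : S → Set Ω := fun x =>
      {ω | Xhat m ω = x ∧ (n : ℝ) ≤ ∑ i ∈ Finset.Icc 1 m, T i ω} with hBdef
    have hBmeas : ∀ x, MeasurableSet (B x) := fun x =>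
      ((hXmeas m) (measurableSet_singleton x)).inter hA
    have hBdisj : Pairwise (Function.onFun Disjoint B) := by
      intro x y hxy
      refine Set.disjoint_left.2 fun ω hx hy => hxy ?_
      exact hx.1.symm.trans hy.1
    have hBunion : (⋃ x, B x) = A := by
      ext ω
      simp only [Set.mem_iUnion, hBdef, Set.mem_setOf_eq, hAdef]
      exact ⟨fun ⟨x, hx⟩ => hx.2, fun h => ⟨Xhat m ω, rfl, h⟩⟩
    have htsumB : ∑' x : S, (μ (B x)) = μ A := by
      rw [← measure_iUnion hBdisj hBmeas, hBunion]
    have hsumfin : (∑' x : S, μ (B x)) ≠ ⊤ := by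
      rw [htsumB]; exact measure_ne_top μ A
    have hsummable : Summable (fun x : S => (μ (B x)).toReal) :=
      ENNReal.summable_toReal hsumfin
    have htsum : ∑' x : S, (μ (B x)).toReal = (μ A).toReal := by
      rw [← ENNReal.tsum_toReal_eq fun x => measure_ne_top μ _, htsumB]
    -- pointwise bound and summability
    have hbound : ∀ x : S, (μ (B x)).toReal * PhatPow r x z₀ ≤
        (μ (B x)).toReal * (C * (r : ℝ) ^ (-(d : ℝ) / 2)) := fun x =>
      mul_le_mul_of_nonneg_left (hsup r hr1 x z₀) ENNReal.toReal_nonneg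
    have hsummable2 : Summable (fun x : S => (μ (B x)).toReal * (C * (r : ℝ) ^ (-(d : ℝ) / 2))) :=
      hsummable.mul_right _
    have hsummable1 : Summable (fun x : S => (μ (B x)).toReal * PhatPow r x z₀) :=
      Summable.of_nonneg_of_le
        (fun x => mul_nonneg ENNReal.toReal_nonneg (hPnonneg r x z₀)) hbound hsummable2
    have hMeq := hMarkov ℓ n hℓ hn
    calc (μ {ω | Xhat ℓ ω = z₀ ∧ (n : ℝ) ≤ ∑ i ∈ Finset.Icc 1 m, T i ω}).toReal
        = ∑' x : S, (μ (B x)).toReal * PhatPow r x z₀ := hMeq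
      _ ≤ ∑' x : S, (μ (B x)).toReal * (C * (r : ℝ) ^ (-(d : ℝ) / 2)) :=
          Summable.tsum_le_tsum hbound hsummable1 hsummable2
      _ = (μ A).toReal * (C * (r : ℝ) ^ (-(d : ℝ) / 2)) := by
          rw [tsum_mul_right, htsum]
      _ ≤ ((n : ℝ)⁻¹ * I) * (C * (r : ℝ) ^ (-(d : ℝ) / 2)) :=
          mul_le_mul_of_nonneg_right cheb
            (mul_nonneg hC.le (Real.rpow_nonneg hrpos.le _))
      _ ≤ ((n : ℝ)⁻¹ * I) * ((C + 1) * (4 ^ ((d : ℝ) / 2) * (ℓ : ℝ) ^ (-(d : ℝ) / 2))) := by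
          refine mul_le_mul_of_nonneg_left ?_
            (mul_nonneg (inv_nonneg.2 hn0.le) hInonneg)
          have h4 : C * (r : ℝ) ^ (-(d : ℝ) / 2) ≤
              C * (4 ^ ((d : ℝ) / 2) * (ℓ : ℝ) ^ (-(d : ℝ) / 2)) :=
            mul_le_mul_of_nonneg_left hker hC.le
          nlinarith [mul_nonneg (mul_nonneg (by norm_num : (0:ℝ) ≤ 1)
            (le_trans zero_le_one hfour)) hrpow_nonneg]
      _ = (C + 1) * 4 ^ ((d : ℝ) / 2) * (ℓ : ℝ) ^ (-(d : ℝ) / 2) * (n : ℝ)⁻¹ * I := by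
          ring
end

section
/- Let μ be a probability measure preserved by a transformation τ, let f ∈ L^p(μ) for all p ≥ 1 with f ≥ 0, and set W* := sup_{ℓ≥1} (1/ℓ) Σ_{j=0}^{ℓ−1} f∘τ^j. Then W* ∈ L^p(μ) for all p ≥ 1. -/
open MeasureTheory
open scoped BigOperators ENNReal
set_option linter.unusedSectionVars false
set_option linter.unnecessarySimpa false

noncomputable section WienerAux

variable {α : Type*} [MeasurableSpace α]

/-- Birkhoff sums. -/
def birkS (h : α → ℝ) (τ : α → α) (n : ℕ) (x : α) : ℝ :=
  ∑ j ∈ Finset.range n, h (τ^[j] x)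

/-- Running maxima of Birkhoff sums (including `0`). -/
def birkM (h : α → ℝ) (τ : α → α) : ℕ → α → ℝ
  | 0 => fun _ => 0
  | k + 1 => fun x => max (birkM h τ k x) (birkS h τ (k + 1) x)

variable {h g : α → ℝ} {τ : α → α}

lemma birkM_nonneg (h : α → ℝ) (τ : α → α) (k : ℕ) (x : α) : 0 ≤ birkM h τ k x := by
  induction k with
  | zero => simp [birkM]
  | succ k ih => exact le_trans ih (le_max_left _ _)

lemma birkS_le_birkM {n k : ℕ} (hn : n ≤ k) (x : α) : birkS h τ n x ≤ birkM h τ k x := by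
  induction k with
  | zero =>
    interval_cases n
    simp [birkS, birkM]
  | succ k ih =>
    rcases Nat.lt_or_ge n (k + 1) with hlt | hge
    · exact le_trans (ih (Nat.lt_succ_iff.mp hlt)) (le_max_left _ _)
    · have : n = k + 1 := le_antisymm hn hge
      subst this
      exact le_max_right _ _

lemma birkM_pos_exists {k : ℕ} {x : α} (hx : 0 < birkM h τ k x) :
    ∃ n, 1 ≤ n ∧ n ≤ k ∧ birkM h τ k x ≤ birkS h τ n x := by
  induction k with
  | zero => simp [birkM] at hx
  | succ k ih =>
    rcases le_or_gt (birkS h τ (k + 1) x) (birkM h τ k x) with hle | hlt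
    · have hM : birkM h τ (k + 1) x = birkM h τ k x := max_eq_left hle
      rw [hM] at hx ⊢
      obtain ⟨n, h1, h2, h3⟩ := ih hx
      exact ⟨n, h1, h2.trans (Nat.le_succ k), h3⟩
    · refine ⟨k + 1, Nat.succ_le_succ (Nat.zero_le k), le_rfl, ?_⟩
      exact max_le hlt.le le_rfl

lemma birkS_succ (n : ℕ) (x : α) :
    birkS h τ (n + 1) x = h x + birkS h τ n (τ x) := by
  simp only [birkS]
  rw [Finset.sum_range_succ']
  simp only [Function.iterate_succ_apply, Function.iterate_zero_apply]
  ring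

lemma birkM_key {k : ℕ} {x : α} (hx : 0 < birkM h τ k x) :
    birkM h τ k x ≤ h x + birkM h τ k (τ x) := by
  obtain ⟨n, h1, h2, h3⟩ := birkM_pos_exists hx
  obtain ⟨m, rfl⟩ := Nat.exists_eq_add_of_le' h1
  calc birkM h τ k x ≤ birkS h τ (m + 1) x := h3
    _ = h x + birkS h τ m (τ x) := birkS_succ m x
    _ ≤ h x + birkM h τ k (τ x) := by
        have hm : m ≤ k := le_trans (Nat.le_succ m) h2
        exact add_le_add_right (birkS_le_birkM hm (τ x)) _

lemma birkS_measurable (hh : Measurable h) (hτ : Measurable τ) (n : ℕ) :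
    Measurable (birkS h τ n) := by
  apply Finset.measurable_sum
  intro j _
  exact hh.comp (hτ.iterate j)

lemma birkM_measurable (hh : Measurable h) (hτ : Measurable τ) (k : ℕ) :
    Measurable (birkM h τ k) := by
  induction k with
  | zero => simpa [birkM] using measurable_const
  | succ k ih => exact Measurable.max ih (birkS_measurable hh hτ (k + 1))

lemma integrable_comp_iterate {μ : Measure α} (hτ : MeasurePreserving τ μ μ)
    (hint : Integrable h μ) (j : ℕ) : Integrable (fun x => h (τ^[j] x)) μ :=
  memLp_one_iff_integrable.mp
    ((memLp_one_iff_integrable.mpr hint).comp_measurePreserving (hτ.iterate j))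

lemma birkS_integrable {μ : Measure α} (hτ : MeasurePreserving τ μ μ)
    (hint : Integrable h μ) (n : ℕ) : Integrable (birkS h τ n) μ := by
  apply integrable_finset_sum
  intro j _
  exact integrable_comp_iterate hτ hint j

lemma birkM_integrable {μ : Measure α} (hτ : MeasurePreserving τ μ μ)
    (hint : Integrable h μ) (k : ℕ) : Integrable (birkM h τ k) μ := by
  induction k with
  | zero => simpa [birkM] using integrable_const (0 : ℝ)
  | succ k ih =>
    have h2 := ih.sup (birkS_integrable hτ hint (k + 1))
    have : (fun x => birkM h τ k x ⊔ birkS h τ (k+1) x) = birkM h τ (k+1) := by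
      funext x; simp [birkM]
    rwa [← this]

/-- Hopf's maximal ergodic lemma. -/
lemma hopf_maximal (μ : Measure α) [IsProbabilityMeasure μ]
    (hτ : MeasurePreserving τ μ μ) (hh : Measurable h) (hint : Integrable h μ) (k : ℕ) :
    0 ≤ ∫ x in {x | 0 < birkM h τ k x}, h x ∂μ := by
  set M := birkM h τ k with hM
  set E := {x | 0 < M x} with hEdef
  have hMmeas : Measurable M := birkM_measurable hh hτ.measurable k
  have hEmeas : MeasurableSet E := measurableSet_lt measurable_const hMmeas
  have hMint : Integrable M μ := birkM_integrable hτ hint k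
  have hMτint : Integrable (fun x => M (τ x)) μ :=
    memLp_one_iff_integrable.mp
      ((memLp_one_iff_integrable.mpr hMint).comp_measurePreserving hτ)
  have key : ∀ x ∈ E, M x - M (τ x) ≤ h x := by
    intro x hx
    have := birkM_key (hx : 0 < M x)
    linarith
  have step1 : ∫ x in E, (M x - M (τ x)) ∂μ ≤ ∫ x in E, h x ∂μ :=
    setIntegral_mono_on ((hMint.sub hMτint).integrableOn) hint.integrableOn hEmeas key
  have step2 : ∫ x, (M x - M (τ x)) ∂μ ≤ ∫ x in E, (M x - M (τ x)) ∂μ := by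
    have hsplit : ∫ x in E, (M x - M (τ x)) ∂μ + ∫ x in Eᶜ, (M x - M (τ x)) ∂μ
        = ∫ x, (M x - M (τ x)) ∂μ := integral_add_compl hEmeas (hMint.sub hMτint)
    have hneg : ∫ x in Eᶜ, (M x - M (τ x)) ∂μ ≤ 0 := by
      apply setIntegral_nonpos hEmeas.compl
      intro x hx
      have h1 : ¬ (0 < M x) := hx
      have h2 : M x = 0 := le_antisymm (not_lt.mp h1) (birkM_nonneg h τ k x)
      have h3 : 0 ≤ M (τ x) := birkM_nonneg h τ k (τ x)
      linarith
    linarith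
  have step3 : ∫ x, (M x - M (τ x)) ∂μ = 0 := by
    rw [integral_sub hMint hMτint]
    have : ∫ x, M (τ x) ∂μ = ∫ x, M x ∂μ := by
      calc ∫ x, M (τ x) ∂μ = ∫ y, M y ∂(μ.map τ) := by
            rw [integral_map hτ.aemeasurable]
            rw [hτ.map_eq]
            exact hMmeas.aestronglyMeasurable
        _ = ∫ x, M x ∂μ := by rw [hτ.map_eq]
    linarith
  linarith

/-- Cesàro averages, matching the statement's shape. -/
def birkA (g : α → ℝ) (τ : α → α) (n : ℕ) (x : α) : ℝ :=
  (1 / ((n : ℝ) + 1)) * ∑ j ∈ Finset.range (n + 1), g (τ^[j] x)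

/-- Running maxima of the averages. -/
def birkT (g : α → ℝ) (τ : α → α) : ℕ → α → ℝ
  | 0 => birkA g τ 0
  | N + 1 => fun x => max (birkT g τ N x) (birkA g τ (N + 1) x)

lemma birkA_nonneg (hg : ∀ x, 0 ≤ g x) (n : ℕ) (x : α) : 0 ≤ birkA g τ n x := by
  apply mul_nonneg
  · positivity
  · exact Finset.sum_nonneg fun j _ => hg _

lemma birkA_le_birkT {n N : ℕ} (hn : n ≤ N) (x : α) :
    birkA g τ n x ≤ birkT g τ N x := by
  induction N with
  | zero => interval_cases n; exact le_rfl
  | succ N ih =>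
    rcases Nat.lt_or_ge n (N + 1) with hlt | hge
    · exact le_trans (ih (Nat.lt_succ_iff.mp hlt)) (le_max_left _ _)
    · have : n = N + 1 := le_antisymm hn hge
      subst this
      exact le_max_right _ _

lemma birkT_mono (x : α) : Monotone (fun N => birkT g τ N x) :=
  monotone_nat_of_le_succ fun N => le_max_left _ _

lemma lt_birkT_iff {t : ℝ} {N : ℕ} {x : α} :
    t < birkT g τ N x ↔ ∃ n ≤ N, t < birkA g τ n x := by
  induction N with
  | zero =>
    constructor
    · intro ht; exact ⟨0, le_rfl, ht⟩
    · rintro ⟨n, hn, ht⟩; interval_cases n; exact ht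
  | succ N ih =>
    constructor
    · intro ht
      rcases lt_max_iff.mp ht with ht | ht
      · obtain ⟨n, hn, h⟩ := ih.mp ht
        exact ⟨n, hn.trans (Nat.le_succ N), h⟩
      · exact ⟨N + 1, le_rfl, ht⟩
    · rintro ⟨n, hn, ht⟩
      exact lt_of_lt_of_le ht (birkA_le_birkT hn x)

lemma birkT_measurable (hg : Measurable g) (hτ : Measurable τ) (N : ℕ) :
    Measurable (birkT g τ N) := by
  have hA : ∀ n, Measurable (birkA g τ n) := by
    intro n
    apply Measurable.const_mul
    apply Finset.measurable_sum
    intro j _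
    exact hg.comp (hτ.iterate j)
  induction N with
  | zero => exact hA 0
  | succ N ih => exact Measurable.max ih (hA (N + 1))

lemma birkS_sub_const (t : ℝ) (n : ℕ) (x : α) :
    birkS (fun y => g y - t) τ n x = birkS g τ n x - n * t := by
  simp [birkS, Finset.sum_sub_distrib, mul_comm]

lemma lt_birkA_iff_birkS {t : ℝ} {n : ℕ} {x : α} :
    t < birkA g τ n x ↔ 0 < birkS (fun y => g y - t) τ (n + 1) x := by
  have hpos : (0 : ℝ) < (n : ℝ) + 1 := by positivity
  rw [birkS_sub_const]
  have hAS : birkA g τ n x = birkS g τ (n + 1) x / ((n : ℝ) + 1) := by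
    simp [birkA, birkS, div_eq_inv_mul, one_div]
  rw [hAS, lt_div_iff₀ hpos]
  push_cast
  constructor <;> intro h <;> nlinarith

lemma birkT_set_eq (t : ℝ) (N : ℕ) :
    {x | t < birkT g τ N x} = {x | 0 < birkM (fun y => g y - t) τ (N + 1) x} := by
  ext x
  simp only [Set.mem_setOf_eq]
  rw [lt_birkT_iff]
  constructor
  · rintro ⟨n, hn, ht⟩
    have hS := lt_birkA_iff_birkS.mp ht
    exact lt_of_lt_of_le hS (birkS_le_birkM (Nat.succ_le_succ hn) x)
  · intro hx
    obtain ⟨m, h1, h2, h3⟩ := birkM_pos_exists hx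
    obtain ⟨n, rfl⟩ := Nat.exists_eq_add_of_le' h1
    refine ⟨n, Nat.lt_succ_iff.mp h2, ?_⟩
    exact lt_birkA_iff_birkS.mpr (lt_of_lt_of_le hx h3)

/-- The maximal weak-type inequality. -/
lemma maximal_weak (μ : Measure α) [IsProbabilityMeasure μ]
    (hτ : MeasurePreserving τ μ μ) (hgm : Measurable g) (hg : ∀ x, 0 ≤ g x)
    (hint : Integrable g μ) {t : ℝ} (ht : 0 < t) (N : ℕ) :
    ENNReal.ofReal t * μ {x | t < birkT g τ N x}
      ≤ ∫⁻ x in {x | t < birkT g τ N x}, ENNReal.ofReal (g x) ∂μ := by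
  set E := {x | t < birkT g τ N x} with hEdef
  have hEmeas : MeasurableSet E :=
    measurableSet_lt measurable_const (birkT_measurable hgm hτ.measurable N)
  have hEeq : E = {x | 0 < birkM (fun y => g y - t) τ (N + 1) x} := birkT_set_eq t N
  have hhm : Measurable (fun y => g y - t) := hgm.sub measurable_const
  have hhint : Integrable (fun y => g y - t) μ := hint.sub (integrable_const t)
  have h0 : 0 ≤ ∫ x in E, (g x - t) ∂μ := by
    rw [hEeq]
    exact hopf_maximal μ hτ hhm hhint (N + 1)
  have hsub : ∫ x in E, (g x - t) ∂μ = ∫ x in E, g x ∂μ - (μ E).toReal * t := by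
    rw [integral_sub hint.integrableOn (integrableOn_const (measure_ne_top μ E))]
    rw [setIntegral_const]
    simp [smul_eq_mul, Measure.real]
  have h1 : t * (μ E).toReal ≤ ∫ x in E, g x ∂μ := by
    rw [hsub] at h0; linarith [h0]
  calc ENNReal.ofReal t * μ E
      = ENNReal.ofReal (t * (μ E).toReal) := by
        rw [ENNReal.ofReal_mul ht.le, ENNReal.ofReal_toReal (measure_ne_top μ E)]
    _ ≤ ENNReal.ofReal (∫ x in E, g x ∂μ) := ENNReal.ofReal_le_ofReal h1
    _ = ∫⁻ x in E, ENNReal.ofReal (g x) ∂μ :=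
        ofReal_integral_eq_lintegral_ofReal hint.integrableOn
          (Filter.Eventually.of_forall fun x => hg x)

lemma lintegral_rpow_lt_top_of_memℒp {μ : Measure α} {q : ℝ} (hq : 1 ≤ q) {F : α → ℝ}
    (hF : MemLp F (ENNReal.ofReal q) μ) (hFnn : ∀ x, 0 ≤ F x) :
    ∫⁻ x, ENNReal.ofReal (F x) ^ q ∂μ < ∞ := by
  have hq0 : (0 : ℝ) < q := lt_of_lt_of_le one_pos hq
  have hne : ENNReal.ofReal q ≠ 0 := by
    simp [ENNReal.ofReal_eq_zero, not_le, hq0]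
  have hnt : ENNReal.ofReal q ≠ ∞ := ENNReal.ofReal_ne_top
  have h2 := hF.2
  rw [eLpNorm_eq_lintegral_rpow_enorm_toReal hne hnt] at h2
  rw [ENNReal.toReal_ofReal hq0.le] at h2
  have heq : ∫⁻ x, ‖F x‖ₑ ^ q ∂μ = ∫⁻ x, ENNReal.ofReal (F x) ^ q ∂μ := by
    apply lintegral_congr
    intro x
    rw [Real.enorm_eq_ofReal (hFnn x)]
  rw [heq] at h2
  by_contra hcon
  push_neg at hcon
  have : (∫⁻ x, ENNReal.ofReal (F x) ^ q ∂μ) = ∞ := top_le_iff.mp hcon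
  rw [this] at h2
  rw [ENNReal.top_rpow_of_pos (by positivity)] at h2
  exact (lt_irrefl _ h2).elim

lemma birkT_le_sum (hg : ∀ x, 0 ≤ g x) (N : ℕ) (x : α) :
    birkT g τ N x ≤ ∑ n ∈ Finset.range (N + 1), birkA g τ n x := by
  induction N with
  | zero => rw [Finset.sum_range_one]; exact le_rfl
  | succ N ih =>
    rw [Finset.sum_range_succ]
    apply max_le
    · exact le_trans ih (le_add_of_nonneg_right (birkA_nonneg hg _ x))
    · exact le_add_of_nonneg_left
        (Finset.sum_nonneg fun m _ => birkA_nonneg hg m x)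

lemma birkT_memℒp (μ : Measure α) [IsProbabilityMeasure μ]
    (hτ : MeasurePreserving τ μ μ) (hgm : Measurable g) (hg : ∀ x, 0 ≤ g x)
    {p : ℝ≥0∞} (hgLp : MemLp g p μ) (N : ℕ) :
    MemLp (birkT g τ N) p μ := by
  have hA : ∀ n, MemLp (birkA g τ n) p μ := by
    intro n
    apply MemLp.const_mul
    apply memLp_finset_sum
    intro j _
    exact hgLp.comp_measurePreserving (hτ.iterate j)
  -- birkT N ≤ ∑_{n ≤ N} birkA n
  have hSb : MemLp (fun x => ∑ n ∈ Finset.range (N + 1), birkA g τ n x) p μ :=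
    memLp_finset_sum _ fun n _ => hA n
  apply hSb.of_le ((birkT_measurable hgm hτ.measurable N).aestronglyMeasurable)
  apply Filter.Eventually.of_forall
  intro x
  have h3 : 0 ≤ birkT g τ N x := le_trans (birkA_nonneg hg 0 x) (birkA_le_birkT (Nat.zero_le N) x)
  rw [Real.norm_of_nonneg h3,
    Real.norm_of_nonneg (Finset.sum_nonneg fun m _ => birkA_nonneg hg m x)]
  exact birkT_le_sum hg N x


/-- The strong maximal inequality, uniform in the truncation `N`. -/
lemma maximal_strong (μ : Measure α) [IsProbabilityMeasure μ]
    (hτ : MeasurePreserving τ μ μ) (hgm : Measurable g) (hg : ∀ x, 0 ≤ g x)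
    (hint : Integrable g μ) {q : ℝ} (hq : 1 < q)
    (hgq : MemLp g (ENNReal.ofReal q) μ) (N : ℕ) :
    ∫⁻ x, ENNReal.ofReal (birkT g τ N x) ^ q ∂μ ≤
      (ENNReal.ofReal q * (ENNReal.ofReal (q - 1))⁻¹ *
        (∫⁻ x, ENNReal.ofReal (g x) ^ q ∂μ) ^ (1 / q)) ^ q := by
  have hq0 : (0 : ℝ) < q := lt_trans one_pos hq
  have hq1 : (0 : ℝ) < q - 1 := by linarith
  set M := birkT g τ N with hMdef
  set B := ∫⁻ x, ENNReal.ofReal (g x) ^ q ∂μ with hBdef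
  set A := ∫⁻ x, ENNReal.ofReal (M x) ^ q ∂μ with hAdef
  have hMm : Measurable M := birkT_measurable hgm hτ.measurable N
  have hMnn : ∀ x, 0 ≤ M x := fun x =>
    le_trans (birkA_nonneg hg 0 x) (birkA_le_birkT (Nat.zero_le N) x)
  have hAfin : A ≠ ∞ :=
    (lintegral_rpow_lt_top_of_memℒp hq.le (birkT_memℒp μ hτ hgm hg hgq N) hMnn).ne
  have hBfin : B ≠ ∞ := (lintegral_rpow_lt_top_of_memℒp hq.le hgq hg).ne
  set ν := μ.withDensity (fun x => ENNReal.ofReal (g x)) with hνdef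
  have hνapp : ∀ t : ℝ, ν {a | t < M a} = ∫⁻ x in {a | t < M a}, ENNReal.ofReal (g x) ∂μ := by
    intro t
    exact withDensity_apply _ (measurableSet_lt measurable_const hMm)
  set I1 := ∫⁻ t in Set.Ioi (0:ℝ), μ {a | t < M a} * ENNReal.ofReal (t ^ (q - 1)) with hI1
  set I2 := ∫⁻ t in Set.Ioi (0:ℝ), ν {a | t < M a} * ENNReal.ofReal (t ^ (q - 1 - 1)) with hI2
  have L1 : A = ENNReal.ofReal q * I1 := by
    rw [hAdef, hI1, ← lintegral_rpow_eq_lintegral_meas_lt_mul μ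
      (Filter.Eventually.of_forall hMnn) hMm.aemeasurable hq0]
    exact lintegral_congr fun x => ENNReal.ofReal_rpow_of_nonneg (hMnn x) hq0.le
  have hMq1meas : Measurable (fun x => ENNReal.ofReal (M x) ^ (q - 1)) :=
    hMm.ennreal_ofReal.pow_const _
  have L2 : ∫⁻ x, ENNReal.ofReal (M x) ^ (q - 1) ∂ν
      = ∫⁻ x, ENNReal.ofReal (g x) * ENNReal.ofReal (M x) ^ (q - 1) ∂μ := by
    rw [hνdef, lintegral_withDensity_eq_lintegral_mul μ hgm.ennreal_ofReal hMq1meas]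
    rfl
  have L3 : ∫⁻ x, ENNReal.ofReal (M x) ^ (q - 1) ∂ν = ENNReal.ofReal (q - 1) * I2 := by
    rw [hI2, ← lintegral_rpow_eq_lintegral_meas_lt_mul ν
      (Filter.Eventually.of_forall hMnn) hMm.aemeasurable hq1]
    exact lintegral_congr fun x => ENNReal.ofReal_rpow_of_nonneg (hMnn x) hq1.le
  have L4 : I1 ≤ I2 := by
    apply lintegral_mono_ae
    rw [ae_restrict_iff' measurableSet_Ioi]
    apply Filter.Eventually.of_forall
    intro t ht
    have htpos : (0 : ℝ) < t := ht
    have hsplit : ENNReal.ofReal (t ^ (q - 1))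
        = ENNReal.ofReal t * ENNReal.ofReal (t ^ (q - 1 - 1)) := by
      rw [← ENNReal.ofReal_mul htpos.le]
      congr 1
      have h1 : t ^ (q - 1) = t ^ (1 + (q - 1 - 1)) := by ring_nf
      rw [h1, Real.rpow_add htpos, Real.rpow_one]
    rw [hsplit, ← mul_assoc, mul_comm (μ {a | t < M a}) (ENNReal.ofReal t), hνapp t]
    apply mul_le_mul_left
    exact maximal_weak μ hτ hgm hg hint htpos N
  -- Hölder
  have hr : Real.HolderConjugate q (q / (q - 1)) := by
    have := Real.HolderConjugate.conjExponent hq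
    simpa [Real.conjExponent] using this
  have hum : AEMeasurable (fun x => ENNReal.ofReal (g x)) μ := hgm.ennreal_ofReal.aemeasurable
  have hvm : AEMeasurable (fun x => ENNReal.ofReal (M x) ^ (q - 1)) μ := hMq1meas.aemeasurable
  have Hold := ENNReal.lintegral_mul_le_Lp_mul_Lq μ hr hum hvm
  have hvpow : ∀ x : α, (ENNReal.ofReal (M x) ^ (q - 1)) ^ (q / (q - 1))
      = ENNReal.ofReal (M x) ^ q := by
    intro x
    rw [← ENNReal.rpow_mul]
    congr 1
    field_simp
  have Hold2 : ∫⁻ x, ENNReal.ofReal (g x) * ENNReal.ofReal (M x) ^ (q - 1) ∂μ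
      ≤ B ^ (1 / q) * A ^ ((q - 1) / q) := by
    have h1 : (1 : ℝ) / (q / (q - 1)) = (q - 1) / q := by
      field_simp
    calc ∫⁻ x, ENNReal.ofReal (g x) * ENNReal.ofReal (M x) ^ (q - 1) ∂μ
        = ∫⁻ x, ((fun x => ENNReal.ofReal (g x)) * fun x => ENNReal.ofReal (M x) ^ (q - 1)) x ∂μ := by
          rfl
      _ ≤ (∫⁻ x, ENNReal.ofReal (g x) ^ q ∂μ) ^ (1 / q) *
          (∫⁻ x, (ENNReal.ofReal (M x) ^ (q - 1)) ^ (q / (q - 1)) ∂μ) ^ (1 / (q / (q - 1))) := Hold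
      _ = B ^ (1 / q) * A ^ ((q - 1) / q) := by
          have h2 : (∫⁻ a, (ENNReal.ofReal (M a) ^ (q - 1)) ^ (q / (q - 1)) ∂μ) = A :=
            lintegral_congr fun x => hvpow x
          rw [h1, h2, hBdef]
  have hofq1_ne0 : ENNReal.ofReal (q - 1) ≠ 0 := by
    simp only [ne_eq, ENNReal.ofReal_eq_zero, not_le]
    linarith
  have hofq1_net : ENNReal.ofReal (q - 1) ≠ ∞ := ENNReal.ofReal_ne_top
  have hcancel : (ENNReal.ofReal (q - 1))⁻¹ * (ENNReal.ofReal (q - 1) * I2) = I2 := by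
    rw [← mul_assoc, ENNReal.inv_mul_cancel hofq1_ne0 hofq1_net, one_mul]
  set Cc := ENNReal.ofReal q * (ENNReal.ofReal (q - 1))⁻¹ * B ^ (1 / q) with hCc
  have main : A ≤ Cc * A ^ ((q - 1) / q) := by
    calc A = ENNReal.ofReal q * I1 := L1
      _ ≤ ENNReal.ofReal q * I2 := mul_le_mul_right L4 _
      _ = ENNReal.ofReal q * ((ENNReal.ofReal (q - 1))⁻¹ * (ENNReal.ofReal (q - 1) * I2)) := by
          rw [hcancel]
      _ = ENNReal.ofReal q * (ENNReal.ofReal (q - 1))⁻¹ *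
            (∫⁻ x, ENNReal.ofReal (g x) * ENNReal.ofReal (M x) ^ (q - 1) ∂μ) := by
          rw [← L3, L2, mul_assoc]
      _ ≤ ENNReal.ofReal q * (ENNReal.ofReal (q - 1))⁻¹ * (B ^ (1 / q) * A ^ ((q - 1) / q)) :=
          mul_le_mul_right Hold2 _
      _ = Cc * A ^ ((q - 1) / q) := by rw [hCc]; exact (mul_assoc _ _ _).symm
  by_cases hA0 : A = 0
  · rw [hA0]; exact zero_le
  have e2 : A ^ ((q - 1) / q) ≠ 0 := by
    simp only [ne_eq, ENNReal.rpow_eq_zero_iff, not_or]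
    constructor
    · rintro ⟨h, -⟩; exact hA0 h
    · rintro ⟨h, -⟩; exact hAfin h
  have e3 : A ^ ((q - 1) / q) ≠ ∞ := by
    simp only [ne_eq, ENNReal.rpow_eq_top_iff, not_or]
    constructor
    · rintro ⟨h, hneg⟩
      exact absurd hneg (not_lt.mpr (by positivity))
    · rintro ⟨h, -⟩; exact hAfin h
  have e1 : A = A ^ (1 / q) * A ^ ((q - 1) / q) := by
    rw [← ENNReal.rpow_add _ _ hA0 hAfin]
    have : 1 / q + (q - 1) / q = 1 := by field_simp; ring
    rw [this, ENNReal.rpow_one]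
  have e4 : A ^ (1 / q) ≤ Cc := by
    rw [← ENNReal.mul_le_mul_iff_left e2 e3, ← e1]
    exact main
  calc A = (A ^ (1 / q)) ^ q := by
        rw [← ENNReal.rpow_mul]
        rw [one_div, inv_mul_cancel₀ hq0.ne', ENNReal.rpow_one]
    _ ≤ Cc ^ q := ENNReal.rpow_le_rpow e4 hq0.le

/-- Pointwise bound of the supremum by the monotone truncations. -/
lemma sup_pointwise_bound {q : ℝ} (hq : 1 < q) (hg : ∀ x, 0 ≤ g x) (x : α) :
    ENNReal.ofReal (⨆ ℓ : ℕ, birkA g τ ℓ x) ^ q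
      ≤ ⨆ N : ℕ, ENNReal.ofReal (birkT g τ N x) ^ q := by
  have hq0 : (0 : ℝ) < q := lt_trans one_pos hq
  set c := ⨆ N : ℕ, ENNReal.ofReal (birkT g τ N x) ^ q with hc
  by_cases hcT : c = ∞
  · rw [hcT]; exact le_top
  have hb : ∀ N : ℕ, ENNReal.ofReal (birkT g τ N x) ≤ c ^ (1 / q) := by
    intro N
    calc ENNReal.ofReal (birkT g τ N x)
        = (ENNReal.ofReal (birkT g τ N x) ^ q) ^ (1 / q) := by
          rw [← ENNReal.rpow_mul, mul_one_div, div_self hq0.ne', ENNReal.rpow_one]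
      _ ≤ c ^ (1 / q) := ENNReal.rpow_le_rpow (le_iSup (fun N => ENNReal.ofReal (birkT g τ N x) ^ q) N) (by positivity)
  have hfin : c ^ (1 / q) ≠ ∞ := by
    intro hcon
    rw [ENNReal.rpow_eq_top_iff] at hcon
    rcases hcon with ⟨h1, h2⟩ | ⟨h1, -⟩
    · exact absurd h2 (not_lt.mpr (by positivity))
    · exact hcT h1
  set b := (c ^ (1 / q)).toReal with hbdef
  have hb' : ∀ ℓ : ℕ, birkA g τ ℓ x ≤ b := by
    intro ℓ
    have h1 : birkA g τ ℓ x ≤ birkT g τ ℓ x := birkA_le_birkT le_rfl x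
    have h2 : ENNReal.ofReal (birkT g τ ℓ x) ≤ c ^ (1 / q) := hb ℓ
    have h3 : birkT g τ ℓ x ≤ b := by
      have hTnn : 0 ≤ birkT g τ ℓ x :=
        le_trans (birkA_nonneg hg 0 x) (birkA_le_birkT (Nat.zero_le ℓ) x)
      rw [← ENNReal.ofReal_le_iff_le_toReal hfin] at *
      exact h2
    linarith
  have hFb : (⨆ ℓ : ℕ, birkA g τ ℓ x) ≤ b := Real.iSup_le hb' ENNReal.toReal_nonneg
  calc ENNReal.ofReal (⨆ ℓ : ℕ, birkA g τ ℓ x) ^ q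
      ≤ ENNReal.ofReal b ^ q :=
        ENNReal.rpow_le_rpow (ENNReal.ofReal_le_ofReal hFb) hq0.le
    _ = (c ^ (1 / q)) ^ q := by rw [hbdef, ENNReal.ofReal_toReal hfin]
    _ = c := by
        rw [← ENNReal.rpow_mul, one_div, inv_mul_cancel₀ hq0.ne', ENNReal.rpow_one]

/-- The main estimate: the ergodic maximal function of `g` is in `L^q`. -/
lemma maximal_memℒp (μ : Measure α) [IsProbabilityMeasure μ]
    (hτ : MeasurePreserving τ μ μ) (hgm : Measurable g) (hg : ∀ x, 0 ≤ g x)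
    (hint : Integrable g μ) {q : ℝ} (hq : 1 < q)
    (hgq : MemLp g (ENNReal.ofReal q) μ) :
    MemLp (fun x => ⨆ ℓ : ℕ, birkA g τ ℓ x) (ENNReal.ofReal q) μ := by
  have hq0 : (0 : ℝ) < q := lt_trans one_pos hq
  have hAmeas : ∀ ℓ : ℕ, Measurable (birkA g τ ℓ) := by
    intro n
    apply Measurable.const_mul
    apply Finset.measurable_sum
    intro j _
    exact hgm.comp (hτ.measurable.iterate j)
  have hFm : Measurable (fun x => ⨆ ℓ : ℕ, birkA g τ ℓ x) :=
    Measurable.iSup fun ℓ => hAmeas ℓ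
  have hFnn : ∀ x, 0 ≤ ⨆ ℓ : ℕ, birkA g τ ℓ x := fun x =>
    Real.iSup_nonneg fun ℓ => birkA_nonneg hg ℓ x
  refine ⟨hFm.aestronglyMeasurable, ?_⟩
  have hne : ENNReal.ofReal q ≠ 0 := by simp [ENNReal.ofReal_eq_zero, not_le, hq0]
  have hnt : ENNReal.ofReal q ≠ ∞ := ENNReal.ofReal_ne_top
  rw [eLpNorm_eq_lintegral_rpow_enorm_toReal hne hnt, ENNReal.toReal_ofReal hq0.le]
  set K := (ENNReal.ofReal q * (ENNReal.ofReal (q - 1))⁻¹ *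
    (∫⁻ x, ENNReal.ofReal (g x) ^ q ∂μ) ^ (1 / q)) ^ q with hK
  have hKfin : K ≠ ∞ := by
    have hB : (∫⁻ x, ENNReal.ofReal (g x) ^ q ∂μ) ≠ ∞ :=
      (lintegral_rpow_lt_top_of_memℒp hq.le hgq hg).ne
    rw [hK]
    apply ENNReal.rpow_ne_top_of_nonneg hq0.le
    apply ENNReal.mul_ne_top
    · apply ENNReal.mul_ne_top ENNReal.ofReal_ne_top
      exact ENNReal.inv_ne_top.mpr (by simp [ENNReal.ofReal_eq_zero, not_le]; linarith)
    · exact ENNReal.rpow_ne_top_of_nonneg (by positivity) hB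
  have hbound : ∫⁻ x, ‖(⨆ ℓ : ℕ, birkA g τ ℓ x)‖ₑ ^ q ∂μ ≤ K := by
    have heq : ∀ x, ‖(⨆ ℓ : ℕ, birkA g τ ℓ x)‖ₑ ^ q
        = ENNReal.ofReal (⨆ ℓ : ℕ, birkA g τ ℓ x) ^ q := by
      intro x
      rw [Real.enorm_eq_ofReal (hFnn x)]
    calc ∫⁻ x, ‖(⨆ ℓ : ℕ, birkA g τ ℓ x)‖ₑ ^ q ∂μ
        = ∫⁻ x, ENNReal.ofReal (⨆ ℓ : ℕ, birkA g τ ℓ x) ^ q ∂μ := lintegral_congr heq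
      _ ≤ ∫⁻ x, ⨆ N : ℕ, ENNReal.ofReal (birkT g τ N x) ^ q ∂μ :=
          lintegral_mono fun x => sup_pointwise_bound hq hg x
      _ = ⨆ N : ℕ, ∫⁻ x, ENNReal.ofReal (birkT g τ N x) ^ q ∂μ := by
          apply lintegral_iSup
          · intro N
            exact (birkT_measurable hgm hτ.measurable N).ennreal_ofReal.pow_const _
          · intro N M hNM x
            exact ENNReal.rpow_le_rpow
              (ENNReal.ofReal_le_ofReal (birkT_mono x hNM)) hq0.le
      _ ≤ K := iSup_le fun N => maximal_strong μ hτ hgm hg hint hq hgq N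
  calc (∫⁻ x, ‖(⨆ ℓ : ℕ, birkA g τ ℓ x)‖ₑ ^ q ∂μ) ^ (1 / q)
      ≤ K ^ (1 / q) := ENNReal.rpow_le_rpow hbound (by positivity)
    _ < ∞ := ENNReal.rpow_lt_top_of_nonneg (by positivity) hKfin

end WienerAux

/-- Wiener's Dominated Ergodic Theorem: if `f ≥ 0` lies in `L^p(μ)` for all `p ≥ 1` and
`τ` preserves the probability measure `μ`, then the ergodic maximal function
`W* = sup_ℓ (1/ℓ)Σ_{j<ℓ} f∘τ^j` lies in `L^p(μ)` for all `p ≥ 1`. -/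
theorem wiener_dominated_ergodic
    {α : Type*} [MeasurableSpace α] (μ : Measure α) [IsProbabilityMeasure μ]
    (τ : α → α) (hτ : MeasurePreserving τ μ μ)
    (f : α → ℝ) (hf : ∀ x, 0 ≤ f x)
    (hfLp : ∀ p : ℝ, 1 ≤ p → MemLp f (ENNReal.ofReal p) μ) :
    ∀ p : ℝ, 1 ≤ p →
      MemLp (fun x => ⨆ ℓ : ℕ,
        (1 / ((ℓ : ℝ) + 1)) * ∑ j ∈ Finset.range (ℓ + 1), f (τ^[j] x))
        (ENNReal.ofReal p) μ := by
  intro p hp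
  -- measurable nonnegative representative of `f`
  obtain ⟨g₀, hg₀sm, hfg₀⟩ := (hfLp 1 le_rfl).1
  set g : α → ℝ := fun x => max (g₀ x) 0 with hgdef
  have hgm : Measurable g := hg₀sm.measurable.max measurable_const
  have hg : ∀ x, 0 ≤ g x := fun x => le_max_right _ _
  have hfg : f =ᵐ[μ] g := by
    filter_upwards [hfg₀] with x hx
    rw [hgdef]
    simp only [← hx]
    exact (max_eq_left (hf x)).symm
  set q : ℝ := p + 1 with hqdef
  have hq : 1 < q := by rw [hqdef]; linarith
  have hgq : MemLp g (ENNReal.ofReal q) μ := (hfLp q (by linarith)).ae_eq hfg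
  have hgint : Integrable g μ := by
    have h1 : MemLp g (ENNReal.ofReal 1) μ := (hfLp 1 le_rfl).ae_eq hfg
    rw [ENNReal.ofReal_one] at h1
    exact memLp_one_iff_integrable.mp h1
  have hGq : MemLp (fun x => ⨆ ℓ : ℕ, birkA g τ ℓ x) (ENNReal.ofReal q) μ :=
    maximal_memℒp μ hτ hgm hg hgint hq hgq
  have hGp : MemLp (fun x => ⨆ ℓ : ℕ, birkA g τ ℓ x) (ENNReal.ofReal p) μ :=
    hGq.mono_exponent (ENNReal.ofReal_le_ofReal (by linarith))
  have hae : (fun x => ⨆ ℓ : ℕ, birkA g τ ℓ x) =ᵐ[μ]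
      (fun x => ⨆ ℓ : ℕ, (1 / ((ℓ : ℝ) + 1)) * ∑ j ∈ Finset.range (ℓ + 1), f (τ^[j] x)) := by
    have hcomp : ∀ᵐ x ∂μ, ∀ j : ℕ, f (τ^[j] x) = g (τ^[j] x) := by
      rw [MeasureTheory.ae_all_iff]
      intro j
      exact (hτ.iterate j).quasiMeasurePreserving.ae_eq_comp hfg
    filter_upwards [hcomp] with x hx
    have : ∀ ℓ : ℕ, birkA g τ ℓ x
        = (1 / ((ℓ : ℝ) + 1)) * ∑ j ∈ Finset.range (ℓ + 1), f (τ^[j] x) := by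
      intro ℓ
      simp only [birkA]
      congr 1
      exact Finset.sum_congr rfl fun j _ => (hx j).symm
    simp only [this]
  exact hGp.ae_eq hae
end
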